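/- arXiv:1504.07319 — 3 statements merged into one kernel-verified Lean document; each statement's English description precedes it below -/
import Mathlib

section
/- Let F be a field, G a group with subgroups H₁ and H₂, and let V₁ and V₂ be modules over FH₁ and FH₂ respectively. Let D be a system of representatives for the (H₁,H₂)-double cosets in G. Then there is an isomorphism of FG-modules ind_{H₁}^G V₁ ⊗_F ind_{H₂}^G V₂ ≅ ⊕_{d∈D} V(d), where for each d∈D and any choice of (x,y) ∈ G×G with H₁x⁻¹yH₂ = H₁dH₂, V(d) ≅ ind_{H^{(x,y)}}^G (V₁ˣ ⊗_F V₂ʸ) with H^{(x,y)} = xH₁x⁻¹ ∩ yH₂y⁻¹. In particular, ind_{H₁}^G V₁ ⊗_F ind_{H₂}^G V₂ ≅ ⊕_{y∈D} ind_{H₁ ∩ yH₂y⁻¹}^G (V₁ ⊗_F V₂ʸ). No finiteness assumptions on G, the subgroups, or the modules are made. -/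
open scoped TensorProduct DirectSum

section Preliminaries

variable (F : Type*) [Field F]

/-- Isomorphism (equivalence) of representations: an `F`-linear equivalence intertwining
the two actions. -/
def RepIso {G : Type*} [Monoid G] {V V' : Type*} [AddCommMonoid V] [Module F V]
    [AddCommMonoid V'] [Module F V'] (ρ : Representation F G V) (τ : Representation F G V') :
    Prop :=
  ∃ e : V ≃ₗ[F] V', ∀ (g : G) (v : V), e (ρ g v) = τ g (e v)

/-- Irreducibility of a representation: the space is nonzero and admits no invariant
subspaces other than `⊥` and `⊤`. -/
def IsIrreducibleRep {G : Type*} [Monoid G] {V : Type*} [AddCommMonoid V] [Module F V]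
    (ρ : Representation F G V) : Prop :=
  Nontrivial V ∧ ∀ p : Submodule F V, (∀ g : G, ∀ v ∈ p, ρ g v ∈ p) → p = ⊥ ∨ p = ⊤

/-- The subrepresentation on an invariant submodule. -/
def subRep {G : Type*} [Monoid G] {V : Type*} [AddCommMonoid V] [Module F V]
    (ρ : Representation F G V) (p : Submodule F V) (hp : ∀ g : G, ∀ v ∈ p, ρ g v ∈ p) :
    Representation F G ↥p where
  toFun g := (ρ g).restrict (fun v hv => hp g v hv)
  map_one' := by ext v; simp [LinearMap.restrict_apply]
  map_mul' g₁ g₂ := by ext v; simp [LinearMap.restrict_apply]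

/-- A representation is completely reducible if the underlying module is the sum of its
irreducible invariant submodules. -/
def IsCompletelyReducibleRep {G : Type*} [Monoid G] {V : Type*} [AddCommMonoid V]
    [Module F V] (ρ : Representation F G V) : Prop :=
  sSup {q : Submodule F V |
    ∃ hq : ∀ g : G, ∀ v ∈ q, ρ g v ∈ q, IsIrreducibleRep F (subRep F ρ q hq)} = ⊤

/-- The homogeneous component determined by `σ`: the sum of all irreducible invariant
submodules whose subrepresentation is isomorphic to `σ`. -/
noncomputable def homComponent {G : Type*} [Monoid G] {V W : Type*} [AddCommMonoid V]
    [Module F V] [AddCommMonoid W] [Module F W] (ρ : Representation F G V)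
    (σ : Representation F G W) : Submodule F V :=
  sSup {q : Submodule F V |
    ∃ hq : ∀ g : G, ∀ v ∈ q, ρ g v ∈ q,
      IsIrreducibleRep F (subRep F ρ q hq) ∧ RepIso F (subRep F ρ q hq) σ}

/-- The set of all homogeneous components of a representation. -/
noncomputable def homComponents {G : Type*} [Monoid G] {V : Type*} [AddCommMonoid V]
    [Module F V] (ρ : Representation F G V) : Set (Submodule F V) :=
  {S | ∃ (q : Submodule F V) (hq : ∀ g : G, ∀ v ∈ q, ρ g v ∈ q),
      IsIrreducibleRep F (subRep F ρ q hq) ∧ S = homComponent F ρ (subRep F ρ q hq)}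

/-- A representation `ρ` lies over `σ` if it admits an invariant submodule whose
subrepresentation is isomorphic to `σ`. -/
def LiesOver {G : Type*} [Monoid G] {V W : Type*} [AddCommMonoid V] [Module F V]
    [AddCommMonoid W] [Module F W] (ρ : Representation F G V) (σ : Representation F G W) :
    Prop :=
  ∃ (q : Submodule F V) (hq : ∀ g : G, ∀ v ∈ q, ρ g v ∈ q),
    RepIso F (subRep F ρ q hq) σ

/-- The stabilizer in `G` of a subspace of a representation space. -/
def stabSubgroup {G : Type*} [Group G] {V : Type*} [AddCommGroup V] [Module F V]
    (ρ : Representation F G V) (S : Submodule F V) : Subgroup G where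
  carrier := {g : G | S.map (ρ g) = S}
  one_mem' := by
    show S.map (ρ 1) = S
    rw [map_one, Module.End.one_eq_id]
    exact Submodule.map_id S
  mul_mem' := by
    intro a b ha hb
    show S.map (ρ (a * b)) = S
    rw [map_mul, Module.End.mul_eq_comp, Submodule.map_comp, hb, ha]
  inv_mem' := by
    intro a ha
    show S.map (ρ a⁻¹) = S
    conv_lhs => rw [← ha]
    rw [← Submodule.map_comp, ← Module.End.mul_eq_comp, ← map_mul, inv_mul_cancel, map_one,
      Module.End.one_eq_id, Submodule.map_id]

theorem stabSubgroup_mapsTo {G : Type*} [Group G] {V : Type*} [AddCommGroup V] [Module F V]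
    (ρ : Representation F G V) (S : Submodule F V) :
    ∀ g : ↥(stabSubgroup F ρ S), ∀ v ∈ S, ρ (g : G) v ∈ S := by
  intro g v hv
  have hg : S.map (ρ (g : G)) = S := g.2
  have := Submodule.mem_map_of_mem (f := ρ (g : G)) hv
  rwa [hg] at this

/-- Outer tensor product of representations of two groups. -/
noncomputable def outerRep {G₁ G₂ : Type*} [Monoid G₁] [Monoid G₂] {V₁ V₂ : Type*}
    [AddCommMonoid V₁] [Module F V₁] [AddCommMonoid V₂] [Module F V₂]
    (ρ₁ : Representation F G₁ V₁) (ρ₂ : Representation F G₂ V₂) :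
    Representation F (G₁ × G₂) (V₁ ⊗[F] V₂) :=
  Representation.tprod (ρ₁.comp (MonoidHom.fst G₁ G₂)) (ρ₂.comp (MonoidHom.snd G₁ G₂))

/-- A projective representation with factor set `α`. -/
def IsProjRep {G : Type*} [Group G] {W : Type*} [AddCommGroup W] [Module F W]
    (X : G → (W →ₗ[F] W)) (α : G → G → Fˣ) : Prop :=
  (∀ g : G, Function.Bijective (X g)) ∧
    ∀ g₁ g₂ : G, (X g₁) ∘ₗ (X g₂) = ((α g₁ g₂ : F)) • X (g₁ * g₂)

/-- Irreducibility of a projective representation: no proper nonzero invariant subspace. -/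
def IsProjIrred {G : Type*} [Group G] {W : Type*} [AddCommGroup W] [Module F W]
    (X : G → (W →ₗ[F] W)) : Prop :=
  Nontrivial W ∧ ∀ p : Submodule F W, (∀ g : G, ∀ w ∈ p, X g w ∈ p) → p = ⊥ ∨ p = ⊤

/-- `D` is a system of representatives for the `(H₁,H₂)`-double cosets in `G`. -/
def IsDCosetReps {G : Type*} [Group G] (H₁ H₂ : Subgroup G) (D : Set G) : Prop :=
  ∀ g : G, ∃! d : G, d ∈ D ∧ ∃ h₁ ∈ H₁, ∃ h₂ ∈ H₂, g = h₁ * d * h₂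

end Preliminaries

section Induction

variable (F : Type*) [Field F] {G : Type*} [Group G] (H : Subgroup G)
variable {W : Type*} [AddCommGroup W] [Module F W] (σ : Representation F ↥H W)

/-- The submodule of relations defining the induced module `FG ⊗_{FH} W` as a quotient
of `FG ⊗_F W`. -/
noncomputable def indRel : Submodule (MonoidAlgebra F G) (MonoidAlgebra F G ⊗[F] W) :=
  Submodule.span (MonoidAlgebra F G)
    {z | ∃ (x : H) (w : W),
      z = (MonoidAlgebra.single (x : G) (1 : F)) ⊗ₜ[F] w
            - (1 : MonoidAlgebra F G) ⊗ₜ[F] (σ x w)}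

/-- The underlying space of the induced module `ind_H^G W = FG ⊗_{FH} W`. -/
noncomputable def IndCar := (MonoidAlgebra F G ⊗[F] W) ⧸ indRel F H σ

noncomputable instance : AddCommGroup (IndCar F H σ) :=
  inferInstanceAs (AddCommGroup ((MonoidAlgebra F G ⊗[F] W) ⧸ indRel F H σ))

noncomputable instance : Module (MonoidAlgebra F G) (IndCar F H σ) :=
  inferInstanceAs (Module (MonoidAlgebra F G) ((MonoidAlgebra F G ⊗[F] W) ⧸ indRel F H σ))

noncomputable instance : Module F (IndCar F H σ) :=
  inferInstanceAs (Module F ((MonoidAlgebra F G ⊗[F] W) ⧸ indRel F H σ))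

noncomputable instance : IsScalarTower F (MonoidAlgebra F G) (IndCar F H σ) :=
  inferInstanceAs (IsScalarTower F (MonoidAlgebra F G)
    ((MonoidAlgebra F G ⊗[F] W) ⧸ indRel F H σ))

/-- The induced representation of `G` on `ind_H^G W = FG ⊗_{FH} W`. -/
noncomputable def IndRep : Representation F G (IndCar F H σ) where
  toFun g :=
    { toFun := fun v => (MonoidAlgebra.single g (1 : F) : MonoidAlgebra F G) • v
      map_add' := fun a b => smul_add _ a b
      map_smul' := fun c v => smul_comm _ c v }
  map_one' := by
    ext v
    show MonoidAlgebra.single (1 : G) (1 : F) • v = v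
    rw [← MonoidAlgebra.one_def, one_smul]
  map_mul' g₁ g₂ := by
    ext v
    show MonoidAlgebra.single (g₁ * g₂) (1 : F) • v = _
    rw [show (MonoidAlgebra.single (g₁ * g₂) (1 : F) : MonoidAlgebra F G)
          = MonoidAlgebra.single g₁ 1 * MonoidAlgebra.single g₂ 1 by
        rw [MonoidAlgebra.single_mul_single, one_mul], mul_smul]
    rfl

end Induction

section DirectSums

variable (F : Type*) [Field F] {G : Type*} [Monoid G]

/-- The direct sum of a family of representations. -/
noncomputable def dsumRep {ι : Type*} {V : ι → Type*} [∀ i, AddCommGroup (V i)]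
    [∀ i, Module F (V i)] (ρ : ∀ i, Representation F G (V i)) :
    Representation F G (⨁ i, V i) where
  toFun g := DFinsupp.mapRange.linearMap (fun i => ρ i g)
  map_one' := by
    simp only [map_one]
    exact DFinsupp.mapRange.linearMap_id
  map_mul' g₁ g₂ := by
    simp only [map_mul, Module.End.mul_eq_comp]
    exact DFinsupp.mapRange.linearMap_comp (fun i => ρ i g₁) (fun i => ρ i g₂)

end DirectSums

section Conjugation

variable {G : Type*} [Group G]

/-- Conjugation `x ↦ g x g⁻¹` as a monoid homomorphism of a normal subgroup. -/
def conjHom {N : Subgroup G} (hN : N.Normal) (g : G) : ↥N →* ↥N where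
  toFun x := ⟨g * (x : G) * g⁻¹, hN.conj_mem x.1 x.2 g⟩
  map_one' := by ext; simp
  map_mul' x y := by ext; simp [mul_assoc]

/-- The conjugate subgroup `xHx⁻¹`. -/
def conjSubgroup (x : G) (H : Subgroup G) : Subgroup G :=
  H.map (MulAut.conj x).toMonoidHom

/-- Conjugating back: the homomorphism `K → H`, `k ↦ x⁻¹ k x`, for `K ≤ xHx⁻¹`. -/
def unconjHom (x : G) (H : Subgroup G) {K : Subgroup G} (hK : K ≤ conjSubgroup x H) :
    ↥K →* ↥H where
  toFun k := ⟨x⁻¹ * (k : G) * x, by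
    obtain ⟨h, hh, e⟩ := hK k.2
    have : x⁻¹ * (k : G) * x = h := by
      rw [← e]; simp [MulAut.conj_apply, mul_assoc]
    rw [this]; exact hh⟩
  map_one' := by ext; simp
  map_mul' a b := by
    ext
    show x⁻¹ * (↑a * ↑b) * x = (x⁻¹ * ↑a * x) * (x⁻¹ * ↑b * x)
    group

/-- The homomorphism `K ∩ xHx⁻¹ → H` (with the source regarded as a subgroup of `K`),
given by `k ↦ x⁻¹ k x`. -/
def mackeyHom (x : G) (H K : Subgroup G) :
    ↥((K ⊓ conjSubgroup x H).subgroupOf K) →* ↥H where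
  toFun l := ⟨x⁻¹ * ((l : ↥K) : G) * x, by
    have h2 : ((l : ↥K) : G) ∈ K ⊓ conjSubgroup x H := l.2
    obtain ⟨h, hh, e⟩ := h2.2
    have : x⁻¹ * ((l : ↥K) : G) * x = h := by
      rw [← e]; simp [MulAut.conj_apply, mul_assoc]
    rw [this]; exact hh⟩
  map_one' := by ext; simp
  map_mul' a b := by
    ext
    show x⁻¹ * (↑↑a * ↑↑b) * x = (x⁻¹ * ↑↑a * x) * (x⁻¹ * ↑↑b * x)
    group

end Conjugation

namespace MackeyAux
variable (F : Type*) [Field F] {G : Type*} [Group G]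
section Concrete
variable (H : Subgroup G) {W : Type*} [AddCommGroup W] [Module F W] (σ : Representation F ↥H W)

lemma out_mem' (g : G) : ((QuotientGroup.mk g : G ⧸ H)).out⁻¹ * g ∈ H := by
  rw [← QuotientGroup.eq]; exact QuotientGroup.out_eq' _

/-- The element of `H` by which `g` differs from the representative of its coset. -/
noncomputable def gElt (g : G) : ↥H := ⟨_, out_mem' H g⟩

@[simp] lemma gElt_coe (g : G) :
    (gElt H g : G) = ((QuotientGroup.mk g : G ⧸ H)).out⁻¹ * g := rfl

/-- The element of `H` relating `g * c.out` and the representative of its coset. -/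
noncomputable def hElt (g : G) (c : G ⧸ H) : ↥H := gElt H (g * c.out)

@[simp] lemma hElt_coe (g : G) (c : G ⧸ H) :
    (hElt H g c : G) = ((QuotientGroup.mk (g * c.out) : G ⧸ H)).out⁻¹ * (g * c.out) := rfl

lemma mk_mul_out (g a : G) :
    (QuotientGroup.mk (g * (QuotientGroup.mk a : G ⧸ H).out) : G ⧸ H) = QuotientGroup.mk (g * a) := by
  rw [QuotientGroup.eq]
  have h : ((QuotientGroup.mk a : G ⧸ H)).out⁻¹ * a ∈ H := out_mem' H a
  simpa [mul_assoc] using h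

lemma out_out (c : G ⧸ H) : ((QuotientGroup.mk c.out : G ⧸ H)).out = c.out := by
  rw [QuotientGroup.out_eq']

lemma mk_one_out (c : G ⧸ H) : (QuotientGroup.mk ((1 : G) * c.out) : G ⧸ H) = c := by
  rw [one_mul, QuotientGroup.out_eq']

lemma hElt_one (c : G ⧸ H) : hElt H 1 c = 1 := by
  ext
  rw [hElt_coe, show ((QuotientGroup.mk ((1:G) * c.out) : G ⧸ H)) = c from mk_one_out H c]
  simp

lemma gElt_out (c : G ⧸ H) : gElt H c.out = 1 := by
  ext; rw [gElt_coe, out_out]; simp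

lemma gElt_mul (g a : G) :
    gElt H (g * a) = hElt H g (QuotientGroup.mk a) * gElt H a := by
  ext
  push_cast [gElt_coe, hElt_coe]
  rw [show ((QuotientGroup.mk (g * ((QuotientGroup.mk a : G ⧸ H)).out) : G ⧸ H))
    = QuotientGroup.mk (g * a) from mk_mul_out H g a]
  group

lemma mk_mul_mul_out (g₁ g₂ : G) (c : G ⧸ H) :
    (QuotientGroup.mk (g₁ * ((QuotientGroup.mk (g₂ * c.out) : G ⧸ H)).out) : G ⧸ H)
      = QuotientGroup.mk (g₁ * g₂ * c.out) := by
  rw [mk_mul_out, mul_assoc]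

lemma hElt_mul (g₁ g₂ : G) (c : G ⧸ H) :
    hElt H (g₁ * g₂) c = hElt H g₁ (QuotientGroup.mk (g₂ * c.out)) * hElt H g₂ c := by
  have := gElt_mul H g₁ (g₂ * c.out)
  rw [← mul_assoc] at this
  exact this

noncomputable def cRepL (g : G) : ((G ⧸ H) →₀ W) →ₗ[F] ((G ⧸ H) →₀ W) :=
  Finsupp.lsum F fun c => (Finsupp.lsingle (QuotientGroup.mk (g * c.out))) ∘ₗ (σ (hElt H g c))

@[simp] lemma cRepL_single (g : G) (c : G ⧸ H) (w : W) :
    cRepL F H σ g (Finsupp.single c w)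
      = Finsupp.single (QuotientGroup.mk (g * c.out)) (σ (hElt H g c) w) := by
  simp [cRepL]

/-- The concrete model of the induced representation, on `(G ⧸ H) →₀ W`. -/
noncomputable def cRep : Representation F G ((G ⧸ H) →₀ W) where
  toFun := cRepL F H σ
  map_one' := by
    refine Finsupp.lhom_ext fun c w => ?_
    simp [mk_one_out, hElt_one]
  map_mul' g₁ g₂ := by
    refine Finsupp.lhom_ext fun c w => ?_
    simp only [cRepL_single, Module.End.mul_apply, hElt_mul, map_mul, mk_mul_mul_out]

@[simp] lemma cRep_single (g : G) (c : G ⧸ H) (w : W) :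
    cRep F H σ g (Finsupp.single c w)
      = Finsupp.single (QuotientGroup.mk (g * c.out)) (σ (hElt H g c) w) :=
  cRepL_single F H σ g c w

end Concrete
end MackeyAux
namespace MackeyAux
section IndIso
variable (F : Type*) [Field F] {G : Type*} [Group G]
variable (H : Subgroup G) {W : Type*} [AddCommGroup W] [Module F W] (σ : Representation F ↥H W)

/-- The linear map `FG ⊗ W → ((G⧸H) →₀ W)` underlying the comparison isomorphism. -/
noncomputable def TLin : (MonoidAlgebra F G ⊗[F] W) →ₗ[F] ((G ⧸ H) →₀ W) :=
  TensorProduct.lift ((Finsupp.lsum F fun g => LinearMap.toSpanSingleton F _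
    ((Finsupp.lsingle (QuotientGroup.mk g : G ⧸ H)) ∘ₗ (σ (gElt H g)))) ∘ₗ
    (MonoidAlgebra.coeffLinearEquiv (S := F) (M := G) F).toLinearMap)

@[simp] lemma TLin_single (g : G) (c : F) (w : W) :
    TLin F H σ (MonoidAlgebra.single g c ⊗ₜ[F] w)
      = c • Finsupp.single (QuotientGroup.mk g : G ⧸ H) (σ (gElt H g) w) := by
  rw [TLin, TensorProduct.lift.tmul]
  rw [LinearMap.comp_apply, LinearEquiv.coe_coe, show (MonoidAlgebra.coeffLinearEquiv F)
    (MonoidAlgebra.single g c : MonoidAlgebra F G) = Finsupp.single g c from rfl]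
  simp [Finsupp.lsum_single, LinearMap.toSpanSingleton_apply,
    Finsupp.sum_single_index]

lemma TLin_comm (g : G) (z : MonoidAlgebra F G ⊗[F] W) :
    TLin F H σ ((MonoidAlgebra.single g (1:F)) • z) = cRep F H σ g (TLin F H σ z) := by
  induction z using TensorProduct.induction_on with
  | zero => simp
  | add a b ha hb => rw [smul_add, map_add, ha, hb, map_add, map_add]
  | tmul a w =>
    induction a using MonoidAlgebra.induction_linear with
    | zero => simp
    | add a b ha hb =>
      rw [show ((a + b) ⊗ₜ[F] w : MonoidAlgebra F G ⊗[F] W) = a ⊗ₜ w + b ⊗ₜ w from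
        TensorProduct.add_tmul a b w, smul_add, map_add, ha, hb, map_add, map_add]
    | single g' c =>
      have h1 : (MonoidAlgebra.single g (1:F)) • ((MonoidAlgebra.single g' c : MonoidAlgebra F G) ⊗ₜ[F] w)
          = (MonoidAlgebra.single (g * g') c : MonoidAlgebra F G) ⊗ₜ[F] w := by
        rw [TensorProduct.smul_tmul', smul_eq_mul, MonoidAlgebra.single_mul_single, one_mul]
      rw [h1, TLin_single, TLin_single, map_smul]
      congr 1
      rw [cRep_single, mk_mul_out, gElt_mul, map_mul]
      rfl

lemma TLin_vanish : ∀ z ∈ indRel F H σ, TLin F H σ z = 0 := by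
  intro z hz
  induction hz using Submodule.span_induction with
  | mem z hzS =>
    obtain ⟨x, w, rfl⟩ := hzS
    rw [map_sub, TLin_single, MonoidAlgebra.one_def, TLin_single, one_smul, one_smul]
    have hcl : (QuotientGroup.mk (x : G) : G ⧸ H) = QuotientGroup.mk (1 : G) := by
      rw [QuotientGroup.eq]; simpa using x.2
    have hel : gElt H (x : G) = gElt H 1 * x := by
      ext
      push_cast [gElt_coe]
      rw [hcl]
      simp
    rw [hcl, hel, map_mul, Module.End.mul_apply, sub_self]
  | zero => simp
  | add a b _ _ ha hb => rw [map_add, ha, hb, add_zero]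
  | smul a z hzmem hz0 =>
    clear hzmem
    induction a using MonoidAlgebra.induction_linear with
    | zero => simp
    | add a b ha hb => rw [add_smul, map_add, ha, hb, add_zero]
    | single g c =>
      have : (MonoidAlgebra.single g c : MonoidAlgebra F G) • z
          = c • ((MonoidAlgebra.single g (1:F)) • z) := by
        rw [← smul_assoc, MonoidAlgebra.smul_single', mul_one]
      rw [this, map_smul, TLin_comm, hz0, map_zero, smul_zero]

/-- The descended map `ind_H^G W → ((G⧸H) →₀ W)`. -/
noncomputable def toC : IndCar F H σ →ₗ[F] ((G ⧸ H) →₀ W) :=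
  (Submodule.liftQ ((indRel F H σ).restrictScalars F) (TLin F H σ)
      (fun z hz => TLin_vanish F H σ z hz)) ∘ₗ
    (Submodule.Quotient.restrictScalarsEquiv F (indRel F H σ)).symm.toLinearMap

@[simp] lemma toC_mk (z : MonoidAlgebra F G ⊗[F] W) :
    toC F H σ (Submodule.Quotient.mk z) = TLin F H σ z := rfl

/-- The map `((G⧸H) →₀ W) → ind_H^G W`. -/
noncomputable def fromC : ((G ⧸ H) →₀ W) →ₗ[F] IndCar F H σ :=
  Finsupp.lsum F fun c => (((indRel F H σ).mkQ).restrictScalars F) ∘ₗ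
    (TensorProduct.mk F (MonoidAlgebra F G) W (MonoidAlgebra.single c.out (1:F)))

@[simp] lemma fromC_single (c : G ⧸ H) (w : W) :
    fromC F H σ (Finsupp.single c w)
      = Submodule.Quotient.mk ((MonoidAlgebra.single c.out (1:F)) ⊗ₜ[F] w) := by
  simp [fromC]
  rfl

lemma toC_fromC (v : (G ⧸ H) →₀ W) : toC F H σ (fromC F H σ v) = v := by
  have : (toC F H σ) ∘ₗ (fromC F H σ) = LinearMap.id := by
    refine Finsupp.lhom_ext fun c w => ?_
    simp only [LinearMap.comp_apply, fromC_single, toC_mk, TLin_single, one_smul,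
      LinearMap.id_apply, QuotientGroup.out_eq', gElt_out]
    simp
  exact DFunLike.congr_fun this v

lemma mk_single_tmul (g : G) (w : W) :
    (Submodule.Quotient.mk ((MonoidAlgebra.single g (1:F)) ⊗ₜ[F] w) : IndCar F H σ)
      = Submodule.Quotient.mk
          ((MonoidAlgebra.single ((QuotientGroup.mk g : G ⧸ H)).out (1:F)) ⊗ₜ[F] (σ (gElt H g) w)) := by
  rw [Submodule.Quotient.eq]
  have hgen : ((MonoidAlgebra.single ((gElt H g : ↥H) : G) (1:F)) ⊗ₜ[F] w
      - (1 : MonoidAlgebra F G) ⊗ₜ[F] (σ (gElt H g) w)) ∈ indRel F H σ :=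
    Submodule.subset_span ⟨gElt H g, w, rfl⟩
  have := Submodule.smul_mem (indRel F H σ)
    (MonoidAlgebra.single ((QuotientGroup.mk g : G ⧸ H)).out (1:F)) hgen
  have heq : (MonoidAlgebra.single ((QuotientGroup.mk g : G ⧸ H)).out (1:F) : MonoidAlgebra F G) •
      ((MonoidAlgebra.single ((gElt H g : ↥H) : G) (1:F)) ⊗ₜ[F] w
        - (1 : MonoidAlgebra F G) ⊗ₜ[F] (σ (gElt H g) w))
      = (MonoidAlgebra.single g (1:F)) ⊗ₜ[F] w
        - (MonoidAlgebra.single ((QuotientGroup.mk g : G ⧸ H)).out (1:F)) ⊗ₜ[F] (σ (gElt H g) w) := by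
    rw [smul_sub, TensorProduct.smul_tmul', TensorProduct.smul_tmul', smul_eq_mul, smul_eq_mul,
      MonoidAlgebra.single_mul_single, one_mul, mul_one]
    have hg : (Quotient.out (QuotientGroup.mk g : G ⧸ H)) * ((gElt H g : ↥H) : G) = g := by
      rw [gElt_coe, mul_inv_cancel_left]
    rw [hg]
  rwa [heq] at this

lemma fromC_toC (v : IndCar F H σ) : fromC F H σ (toC F H σ v) = v := by
  obtain ⟨z, rfl⟩ := Submodule.Quotient.mk_surjective _ v
  rw [toC_mk]
  induction z using TensorProduct.induction_on with
  | zero => simp; rfl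
  | add a b ha hb =>
    rw [map_add, map_add]
    rw [Submodule.Quotient.mk_add] at *
    rw [ha, hb]
    rfl
  | tmul a w =>
    induction a using MonoidAlgebra.induction_linear with
    | zero => simp [TensorProduct.zero_tmul]; rfl
    | add a b ha hb =>
      rw [show ((a + b) ⊗ₜ[F] w : MonoidAlgebra F G ⊗[F] W) = a ⊗ₜ w + b ⊗ₜ w from
        TensorProduct.add_tmul a b w, map_add, map_add, Submodule.Quotient.mk_add, ha, hb]
      rfl
    | single g c =>
      rw [TLin_single, map_smul, fromC_single]
      rw [show ((MonoidAlgebra.single g c : MonoidAlgebra F G) ⊗ₜ[F] w)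
        = c • ((MonoidAlgebra.single g (1:F) : MonoidAlgebra F G) ⊗ₜ[F] w) by
          rw [TensorProduct.smul_tmul', MonoidAlgebra.smul_single', mul_one]]
      rw [Submodule.Quotient.mk_smul]
      rw [show (Submodule.Quotient.mk ((MonoidAlgebra.single g (1:F)) ⊗ₜ[F] w) : IndCar F H σ)
        = Submodule.Quotient.mk
          ((MonoidAlgebra.single ((QuotientGroup.mk g : G ⧸ H)).out (1:F)) ⊗ₜ[F] (σ (gElt H g) w))
        from mk_single_tmul F H σ g w]
      rfl

/-- The comparison equivalence `ind_H^G W ≃ (G⧸H) →₀ W`. -/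
noncomputable def indEquiv : IndCar F H σ ≃ₗ[F] ((G ⧸ H) →₀ W) :=
  LinearEquiv.ofLinear (toC F H σ) (fromC F H σ)
    (LinearMap.ext (toC_fromC F H σ)) (LinearMap.ext (fromC_toC F H σ))

lemma indEquiv_intertwine (g : G) (v : IndCar F H σ) :
    indEquiv F H σ (IndRep F H σ g v) = cRep F H σ g (indEquiv F H σ v) := by
  obtain ⟨z, rfl⟩ := Submodule.Quotient.mk_surjective _ v
  have h1 : IndRep F H σ g (Submodule.Quotient.mk z)
      = Submodule.Quotient.mk ((MonoidAlgebra.single g (1:F)) • z) := rfl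
  rw [h1]
  show toC F H σ _ = cRep F H σ g (toC F H σ _)
  rw [toC_mk, toC_mk, TLin_comm]

/-- `ind_H^G W` is isomorphic, as a representation, to the concrete model. -/
lemma repIso_ind_cRep : RepIso F (IndRep F H σ) (cRep F H σ) :=
  ⟨indEquiv F H σ, indEquiv_intertwine F H σ⟩

end IndIso
end MackeyAux
namespace MackeyAux
section Combinators
variable (F : Type*) [Field F] {G : Type*} [Monoid G]

lemma repIso_refl {V : Type*} [AddCommMonoid V] [Module F V] (ρ : Representation F G V) :
    RepIso F ρ ρ :=
  ⟨LinearEquiv.refl F V, fun _ _ => rfl⟩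

lemma repIso_symm {V V' : Type*} [AddCommMonoid V] [Module F V] [AddCommMonoid V'] [Module F V']
    {ρ : Representation F G V} {τ : Representation F G V'} (h : RepIso F ρ τ) :
    RepIso F τ ρ := by
  obtain ⟨e, he⟩ := h
  refine ⟨e.symm, fun g v => e.injective ?_⟩
  rw [he, e.apply_symm_apply, e.apply_symm_apply]

lemma repIso_trans {V V' V'' : Type*} [AddCommMonoid V] [Module F V] [AddCommMonoid V']
    [Module F V'] [AddCommMonoid V''] [Module F V'']
    {ρ : Representation F G V} {τ : Representation F G V'} {π : Representation F G V''}
    (h : RepIso F ρ τ) (h' : RepIso F τ π) : RepIso F ρ π := by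
  obtain ⟨e, he⟩ := h
  obtain ⟨e', he'⟩ := h'
  exact ⟨e.trans e', fun g v => by simp [he, he']⟩

lemma repIso_tprod {V₁ V₂ W₁ W₂ : Type*} [AddCommGroup V₁] [Module F V₁] [AddCommGroup V₂]
    [Module F V₂] [AddCommGroup W₁] [Module F W₁] [AddCommGroup W₂] [Module F W₂]
    {ρ₁ : Representation F G V₁} {τ₁ : Representation F G W₁}
    {ρ₂ : Representation F G V₂} {τ₂ : Representation F G W₂}
    (h₁ : RepIso F ρ₁ τ₁) (h₂ : RepIso F ρ₂ τ₂) :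
    RepIso F (ρ₁.tprod ρ₂) (τ₁.tprod τ₂) := by
  obtain ⟨e₁, he₁⟩ := h₁
  obtain ⟨e₂, he₂⟩ := h₂
  refine ⟨TensorProduct.congr e₁ e₂, fun g v => ?_⟩
  induction v using TensorProduct.induction_on with
  | zero => simp
  | add a b ha hb => rw [map_add, map_add, ha, hb, map_add, map_add]
  | tmul a b =>
    rw [Representation.tprod_apply, Representation.tprod_apply]
    simp only [TensorProduct.map_tmul, TensorProduct.congr_tmul, he₁, he₂]

lemma repIso_dsum {ι : Type*} {V W : ι → Type*} [∀ i, AddCommGroup (V i)] [∀ i, Module F (V i)]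
    [∀ i, AddCommGroup (W i)] [∀ i, Module F (W i)]
    {ρ : ∀ i, Representation F G (V i)} {τ : ∀ i, Representation F G (W i)}
    (h : ∀ i, RepIso F (ρ i) (τ i)) :
    RepIso F (dsumRep F ρ) (dsumRep F τ) := by
  choose e he using h
  refine ⟨DFinsupp.mapRange.linearEquiv e, fun g v => ?_⟩
  classical
  have hA : ∀ (w : ⨁ i, V i) (i : ι), dsumRep F ρ g w i = ρ i g (w i) := fun w i => by
    show DFinsupp.mapRange (fun i x => ρ i g x) (fun i => (ρ i g).map_zero) w i = _
    rw [DFinsupp.mapRange_apply]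
  have hB : ∀ (w : ⨁ i, W i) (i : ι), dsumRep F τ g w i = τ i g (w i) := fun w i => by
    show DFinsupp.mapRange (fun i x => τ i g x) (fun i => (τ i g).map_zero) w i = _
    rw [DFinsupp.mapRange_apply]
  have hE : ∀ (w : ⨁ i, V i) (i : ι), DFinsupp.mapRange.linearEquiv e w i = e i (w i) :=
    fun w i => by
      show DFinsupp.mapRange (fun i x => e i x) (fun i => (e i).map_zero) w i = _
      rw [DFinsupp.mapRange_apply]
  refine DFinsupp.ext fun i => ?_
  refine (hE _ i).trans ?_
  refine Eq.trans (congrArg (e i) (hA v i)) ?_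
  refine (he i g (v i)).trans ?_
  refine Eq.trans (congrArg (τ i g) (hE v i).symm) ?_
  exact (hB _ i).symm

/-- The linear automorphism given by the action of a group element. -/
noncomputable def repUnit {G' : Type*} [Group G'] {V : Type*} [AddCommGroup V] [Module F V]
    (ρ : Representation F G' V) (g : G') : V ≃ₗ[F] V :=
  LinearEquiv.ofLinear (ρ g) (ρ g⁻¹)
    (by rw [← Module.End.mul_eq_comp, ← map_mul, mul_inv_cancel, map_one, Module.End.one_eq_id])
    (by rw [← Module.End.mul_eq_comp, ← map_mul, inv_mul_cancel, map_one, Module.End.one_eq_id])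

@[simp] lemma repUnit_apply {G' : Type*} [Group G'] {V : Type*} [AddCommGroup V] [Module F V]
    (ρ : Representation F G' V) (g : G') (v : V) : repUnit F ρ g v = ρ g v := rfl

/-- Reindexing a `Finsupp` along a bijection, with an equivalence on each fiber. -/
noncomputable def finsuppCongrTwist {ι κ U U' : Type*} [AddCommGroup U] [Module F U]
    [AddCommGroup U'] [Module F U'] (b : ι ≃ κ) (e : ι → (U ≃ₗ[F] U')) :
    (ι →₀ U) ≃ₗ[F] (κ →₀ U') :=
  LinearEquiv.ofLinear
    (Finsupp.lsum F fun i => Finsupp.lsingle (b i) ∘ₗ (e i).toLinearMap)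
    (Finsupp.lsum F fun j => Finsupp.lsingle (b.symm j) ∘ₗ ((e (b.symm j)).symm.toLinearMap))
    (by
      refine Finsupp.lhom_ext fun j u => ?_
      simp)
    (by
      refine Finsupp.lhom_ext fun i u => ?_
      simp)

@[simp] lemma finsuppCongrTwist_single {ι κ U U' : Type*} [AddCommGroup U] [Module F U]
    [AddCommGroup U'] [Module F U'] (b : ι ≃ κ) (e : ι → (U ≃ₗ[F] U')) (i : ι) (u : U) :
    finsuppCongrTwist F b e (Finsupp.single i u) = Finsupp.single (b i) (e i u) := by
  simp [finsuppCongrTwist]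

end Combinators
end MackeyAux
namespace MackeyAux
section Coset
variable {G : Type*} [Group G]

lemma mem_conjSubgroup_iff (x g : G) (H : Subgroup G) :
    g ∈ conjSubgroup x H ↔ x⁻¹ * g * x ∈ H := by
  constructor
  · rintro ⟨h, hh, rfl⟩
    simpa [MulAut.conj_apply, mul_assoc] using hh
  · intro h
    exact ⟨x⁻¹ * g * x, h, by simp [MulAut.conj_apply]; group⟩

lemma conjSubgroup_one (H : Subgroup G) : conjSubgroup (1 : G) H = H := by
  ext g
  rw [mem_conjSubgroup_iff]
  simp

lemma out_eq_mul_gElt (K' : Subgroup G) (k0 : G) :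
    Quotient.out (QuotientGroup.mk k0 : G ⧸ K') = k0 * ((gElt K' k0 : ↥K') : G)⁻¹ := by
  rw [gElt_coe]
  group

lemma key_mk (H' K' : Subgroup G) (x' : G) (hx' : ∀ k ∈ K', x'⁻¹ * k * x' ∈ H') (k0 : G) :
    (QuotientGroup.mk ((Quotient.out (QuotientGroup.mk k0 : G ⧸ K')) * x') : G ⧸ H')
      = QuotientGroup.mk (k0 * x') := by
  rw [out_eq_mul_gElt]
  have h1 : k0 * ((gElt K' k0 : ↥K') : G)⁻¹ * x'
      = (k0 * x') * (x'⁻¹ * ((gElt K' k0 : ↥K') : G)⁻¹ * x') := by group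
  rw [h1]
  exact QuotientGroup.mk_mul_of_mem _ (hx' _ (K'.inv_mem (gElt K' k0).2))

lemma key_val (H' K' : Subgroup G) (x' : G) (hx' : ∀ k ∈ K', x'⁻¹ * k * x' ∈ H')
    (φ : ↥K' →* ↥H') (hφ : ∀ k : ↥K', ((φ k : ↥H') : G) = x'⁻¹ * (k : G) * x') (k0 : G) :
    gElt H' ((Quotient.out (QuotientGroup.mk k0 : G ⧸ K')) * x') * φ (gElt K' k0)
      = gElt H' (k0 * x') := by
  ext
  push_cast [gElt_coe, hφ]
  rw [show ((QuotientGroup.mk ((Quotient.out (QuotientGroup.mk k0 : G ⧸ K')) * x') : G ⧸ H'))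
    = QuotientGroup.mk (k0 * x') from key_mk H' K' x' hx' k0]
  rw [out_eq_mul_gElt K' k0, gElt_coe]
  group

end Coset
end MackeyAux
namespace MackeyAux
section Bij
variable {G : Type*} [Group G] {H₁ H₂ : Subgroup G} {D : Set G}
variable {x y : D → G} {K : D → Subgroup G}

section Defs
variable (H₁ H₂ x y K)
/-- The index map underlying the Mackey decomposition. -/
noncomputable def bFun : (Σ d : D, G ⧸ K d) → (G ⧸ H₁) × (G ⧸ H₂) :=
  fun p => (QuotientGroup.mk (p.2.out * x p.1), QuotientGroup.mk (p.2.out * y p.1))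
end Defs

variable (hD : IsDCosetReps H₁ H₂ D)
  (hd : ∀ d : D, ∃ h₁ ∈ H₁, ∃ h₂ ∈ H₂, (x d)⁻¹ * y d = h₁ * (d : G) * h₂)
  (hK : ∀ d, K d = conjSubgroup (x d) H₁ ⊓ conjSubgroup (y d) H₂)

include hK in
lemma hx₁ (d : D) : ∀ k ∈ K d, (x d)⁻¹ * k * x d ∈ H₁ := fun k hk =>
  (mem_conjSubgroup_iff _ _ _).mp (by rw [hK d] at hk; exact hk.1)

include hK in
lemma hx₂ (d : D) : ∀ k ∈ K d, (y d)⁻¹ * k * y d ∈ H₂ := fun k hk =>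
  (mem_conjSubgroup_iff _ _ _).mp (by rw [hK d] at hk; exact hk.2)

include hD hd hK in
lemma bFun_injective : Function.Injective (bFun H₁ H₂ x y K) := by
  rintro ⟨d, c⟩ ⟨d', c'⟩ h
  have h1 : (QuotientGroup.mk (c.out * x d) : G ⧸ H₁) = QuotientGroup.mk (c'.out * x d') :=
    congrArg Prod.fst h
  have h2 : (QuotientGroup.mk (c.out * y d) : G ⧸ H₂) = QuotientGroup.mk (c'.out * y d') :=
    congrArg Prod.snd h
  rw [QuotientGroup.eq] at h1 h2
  obtain ⟨a₁, ha₁, a₂, ha₂, hda⟩ := hd d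
  obtain ⟨b₁, hb₁, b₂, hb₂, hdb⟩ := hd d'
  have hdd : d = d' := by
    obtain ⟨d₀, _, huniq⟩ := hD ((x d')⁻¹ * y d')
    have hP' : (d' : G) = d₀ := huniq (d' : G) ⟨d'.2, b₁, hb₁, b₂, hb₂, hdb⟩
    have hP : (d : G) = d₀ := by
      refine huniq (d : G) ⟨d.2, ((c.out * x d)⁻¹ * (c'.out * x d'))⁻¹ * a₁, ?_,
        a₂ * ((c.out * y d)⁻¹ * (c'.out * y d')), H₂.mul_mem ha₂ h2, ?_⟩
      · exact H₁.mul_mem (H₁.inv_mem h1) ha₁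
      · rw [show (((c.out * x d)⁻¹ * (c'.out * x d'))⁻¹ * a₁) * (d : G)
            * (a₂ * ((c.out * y d)⁻¹ * (c'.out * y d')))
          = ((c.out * x d)⁻¹ * (c'.out * x d'))⁻¹ * (a₁ * (d : G) * a₂)
            * ((c.out * y d)⁻¹ * (c'.out * y d')) by group, ← hda]
        group
    exact Subtype.ext (hP.trans hP'.symm)
  subst hdd
  have hmem : c.out⁻¹ * c'.out ∈ K d := by
    refine (Subgroup.ext_iff.mp (hK d) _).mpr ?_
    rw [Subgroup.mem_inf]
    constructor
    · rw [mem_conjSubgroup_iff]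
      rw [show (x d)⁻¹ * (c.out⁻¹ * c'.out) * x d = (c.out * x d)⁻¹ * (c'.out * x d) by group]
      exact h1
    · rw [mem_conjSubgroup_iff]
      rw [show (y d)⁻¹ * (c.out⁻¹ * c'.out) * y d = (c.out * y d)⁻¹ * (c'.out * y d) by group]
      exact h2
  have hcc : c = c' := by
    rw [← QuotientGroup.out_eq' c, ← QuotientGroup.out_eq' c']
    exact QuotientGroup.eq.mpr hmem
  rw [hcc]

include hD hd hK in
lemma bFun_surjective : Function.Surjective (bFun H₁ H₂ x y K) := by
  rintro ⟨c₁, c₂⟩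
  obtain ⟨d₀, ⟨hd₀D, h₁, hh₁, h₂, hh₂, heq⟩, -⟩ := hD (c₁.out⁻¹ * c₂.out)
  set d : D := ⟨d₀, hd₀D⟩ with hddef
  obtain ⟨a₁, ha₁, a₂, ha₂, hda⟩ := hd d
  set k : G := c₁.out * h₁ * a₁⁻¹ * (x d)⁻¹ with hkdef
  refine ⟨⟨d, QuotientGroup.mk k⟩, ?_⟩
  have e3 : y d = x d * (a₁ * (d : G) * a₂) := by rw [← hda]; group
  have e4 : c₂.out = c₁.out * (h₁ * d₀ * h₂) := by rw [← heq]; group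
  have hx : k * x d = c₁.out * (h₁ * a₁⁻¹) := by rw [hkdef]; group
  have hy : k * y d = c₂.out * (h₂⁻¹ * a₂) := by
    rw [hkdef, e3, e4, show (d : G) = d₀ from rfl]
    group
  have hb1 : (QuotientGroup.mk ((QuotientGroup.mk k : G ⧸ K d).out * x d) : G ⧸ H₁) = c₁ := by
    rw [key_mk H₁ (K d) (x d) (hx₁ hK d) k, hx, QuotientGroup.mk_mul_of_mem _
      (H₁.mul_mem hh₁ (H₁.inv_mem ha₁)), QuotientGroup.out_eq']
  have hb2 : (QuotientGroup.mk ((QuotientGroup.mk k : G ⧸ K d).out * y d) : G ⧸ H₂) = c₂ := by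
    rw [key_mk H₂ (K d) (y d) (hx₂ hK d) k, hy, QuotientGroup.mk_mul_of_mem _
      (H₂.mul_mem (H₂.inv_mem hh₂) ha₂), QuotientGroup.out_eq']
  exact Prod.ext hb1 hb2

end Bij
end MackeyAux
namespace MackeyAux
section Main
variable (F : Type*) [Field F] {G : Type*} [Group G] {H₁ H₂ : Subgroup G}
variable {V₁ : Type*} [AddCommGroup V₁] [Module F V₁] (ρ₁ : Representation F ↥H₁ V₁)
variable {V₂ : Type*} [AddCommGroup V₂] [Module F V₂] (ρ₂ : Representation F ↥H₂ V₂)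
variable {D : Set G} {x y : D → G} {K : D → Subgroup G}

lemma dsumRep_single {ι : Type*} [DecidableEq ι] {G' : Type*} [Monoid G'] {V : ι → Type*}
    [∀ i, AddCommGroup (V i)] [∀ i, Module F (V i)] (ρ : ∀ i, Representation F G' (V i))
    (g : G') (i : ι) (v : V i) :
    dsumRep F ρ g (DFinsupp.single i v) = DFinsupp.single i (ρ i g v) := by
  show DFinsupp.mapRange (fun i x => ρ i g x) (fun i => (ρ i g).map_zero)
    (DFinsupp.single i v) = _
  rw [DFinsupp.mapRange_single]

lemma mackey_concrete
    (f₁ : ∀ d : D, ↥(K d) →* ↥H₁) (f₂ : ∀ d : D, ↥(K d) →* ↥H₂)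
    (hf₁ : ∀ (d : D) (k : ↥(K d)), ((f₁ d k : ↥H₁) : G) = (x d)⁻¹ * (k : G) * x d)
    (hf₂ : ∀ (d : D) (k : ↥(K d)), ((f₂ d k : ↥H₂) : G) = (y d)⁻¹ * (k : G) * y d)
    (hD : IsDCosetReps H₁ H₂ D)
    (hd : ∀ d : D, ∃ h₁ ∈ H₁, ∃ h₂ ∈ H₂, (x d)⁻¹ * y d = h₁ * (d : G) * h₂)
    (hK : ∀ d, K d = conjSubgroup (x d) H₁ ⊓ conjSubgroup (y d) H₂) :
    RepIso F ((cRep F H₁ ρ₁).tprod (cRep F H₂ ρ₂))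
      (dsumRep F fun d : D => cRep F (K d) (Representation.tprod (ρ₁.comp (f₁ d)) (ρ₂.comp (f₂ d)))) := by
  classical
  set b : (Σ d : D, G ⧸ K d) ≃ (G ⧸ H₁) × (G ⧸ H₂) :=
    Equiv.ofBijective (bFun H₁ H₂ x y K)
      ⟨bFun_injective hD hd hK, bFun_surjective hD hd hK⟩ with hb
  set tw : ∀ p : Σ d : D, G ⧸ K d, (V₁ ⊗[F] V₂) ≃ₗ[F] (V₁ ⊗[F] V₂) :=
    fun p => TensorProduct.congr (repUnit F ρ₁ (gElt H₁ (p.2.out * x p.1)))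
      (repUnit F ρ₂ (gElt H₂ (p.2.out * y p.1))) with htw
  set E : (((G ⧸ H₁) →₀ V₁) ⊗[F] ((G ⧸ H₂) →₀ V₂)) ≃ₗ[F]
      (⨁ d : D, ((G ⧸ K d) →₀ (V₁ ⊗[F] V₂))) :=
    (finsuppTensorFinsupp F F V₁ V₂ (G ⧸ H₁) (G ⧸ H₂)).trans
      ((finsuppCongrTwist F b tw).symm.trans
        (sigmaFinsuppLequivDFinsupp F)) with hE
  refine repIso_symm F ⟨E.symm, fun g w => ?_⟩
  refine DFunLike.congr_fun (?_ :
    (E.symm.toLinearMap) ∘ₗ ((dsumRep F fun d : D => cRep F (K d)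
        (Representation.tprod (ρ₁.comp (f₁ d)) (ρ₂.comp (f₂ d)))) g)
      = (((cRep F H₁ ρ₁).tprod (cRep F H₂ ρ₂)) g) ∘ₗ E.symm.toLinearMap) w
  refine DFinsupp.lhom_ext' fun d => ?_
  refine Finsupp.lhom_ext' fun c => ?_
  refine TensorProduct.ext' fun v₁ v₂ => ?_
  simp only [LinearMap.comp_apply, DFinsupp.lsingle_apply, Finsupp.lsingle_apply,
    LinearEquiv.coe_toLinearMap]
  -- compute E.symm on singles
  have hEsymm : ∀ (c' : G ⧸ K d) (u : V₁ ⊗[F] V₂),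
      E.symm (DFinsupp.single d (Finsupp.single c' u))
        = (finsuppTensorFinsupp F F V₁ V₂ (G ⧸ H₁) (G ⧸ H₂)).symm
            (Finsupp.single (QuotientGroup.mk (c'.out * x d), QuotientGroup.mk (c'.out * y d))
              (tw ⟨d, c'⟩ u)) := by
    intro c' u
    have h1 : ((sigmaFinsuppLequivDFinsupp F).symm (DFinsupp.single d (Finsupp.single c' u)))
        = Finsupp.single (⟨d, c'⟩ : Σ d : D, G ⧸ K d) u := by
      rw [LinearEquiv.symm_apply_eq]
      exact (sigmaFinsuppEquivDFinsupp_single (⟨d, c'⟩ : Σ d : D, G ⧸ K d) u).symm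
    calc E.symm (DFinsupp.single d (Finsupp.single c' u))
        = (finsuppTensorFinsupp F F V₁ V₂ (G ⧸ H₁) (G ⧸ H₂)).symm
            ((finsuppCongrTwist F b tw)
              ((sigmaFinsuppLequivDFinsupp F).symm
                (DFinsupp.single d (Finsupp.single c' u)))) := by rw [hE]; rfl
      _ = (finsuppTensorFinsupp F F V₁ V₂ (G ⧸ H₁) (G ⧸ H₂)).symm
            ((finsuppCongrTwist F b tw)
              (Finsupp.single (⟨d, c'⟩ : Σ d : D, G ⧸ K d) u)) := by rw [h1]
      _ = (finsuppTensorFinsupp F F V₁ V₂ (G ⧸ H₁) (G ⧸ H₂)).symm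
            (Finsupp.single (b ⟨d, c'⟩) (tw ⟨d, c'⟩ u)) := by rw [finsuppCongrTwist_single]
      _ = _ := rfl
  have hds := dsumRep_single F (fun d : D => cRep F (K d)
    (Representation.tprod (ρ₁.comp (f₁ d)) (ρ₂.comp (f₂ d)))) g d
    (Finsupp.single c (v₁ ⊗ₜ[F] v₂))
  have htw : ∀ (p : Σ d : D, G ⧸ K d) (w₁ : V₁) (w₂ : V₂),
      tw p (w₁ ⊗ₜ[F] w₂) = (ρ₁ (gElt H₁ (p.2.out * x p.1)) w₁)
        ⊗ₜ[F] (ρ₂ (gElt H₂ (p.2.out * y p.1)) w₂) := fun p w₁ w₂ => by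
    rw [htw]; rfl
  have hstep : (dsumRep F fun d : D => cRep F (K d)
        (Representation.tprod (ρ₁.comp (f₁ d)) (ρ₂.comp (f₂ d)))) g
        (DFinsupp.single d (Finsupp.single c (v₁ ⊗ₜ[F] v₂)))
      = DFinsupp.single d (Finsupp.single (QuotientGroup.mk (g * c.out) : G ⧸ K d)
          ((ρ₁ (f₁ d (hElt (K d) g c)) v₁) ⊗ₜ[F] (ρ₂ (f₂ d (hElt (K d) g c)) v₂))) := by
    refine hds.trans (congrArg _ ?_)
    rw [cRep_single]
    refine congrArg _ ?_
    rw [Representation.tprod_apply, TensorProduct.map_tmul]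
    rfl
  refine Eq.trans (congrArg E.symm hstep) ?_
  refine Eq.trans (hEsymm _ _) ?_
  refine Eq.trans ?_ (congrArg (((cRep F H₁ ρ₁).tprod (cRep F H₂ ρ₂)) g) (hEsymm _ _).symm)
  rw [htw, htw]
  -- identify the twisted values on the left
  have hval₁ : ρ₁ (gElt H₁ ((Quotient.out (QuotientGroup.mk (g * c.out) : G ⧸ K d)) * x d))
        (ρ₁ (f₁ d (hElt (K d) g c)) v₁)
      = ρ₁ (gElt H₁ (g * c.out * x d)) v₁ := by
    rw [← key_val H₁ (K d) (x d) (hx₁ hK d) (f₁ d) (hf₁ d) (g * c.out), map_mul]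
    rfl
  have hval₂ : ρ₂ (gElt H₂ ((Quotient.out (QuotientGroup.mk (g * c.out) : G ⧸ K d)) * y d))
        (ρ₂ (f₂ d (hElt (K d) g c)) v₂)
      = ρ₂ (gElt H₂ (g * c.out * y d)) v₂ := by
    rw [← key_val H₂ (K d) (y d) (hx₂ hK d) (f₂ d) (hf₂ d) (g * c.out), map_mul]
    rfl
  rw [hval₁, hval₂, key_mk H₁ (K d) (x d) (hx₁ hK d) (g * c.out),
    key_mk H₂ (K d) (y d) (hx₂ hK d) (g * c.out)]
  -- right side
  rw [finsuppTensorFinsupp_symm_single, finsuppTensorFinsupp_symm_single,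
    Representation.tprod_apply, TensorProduct.map_tmul,
    cRep_single, cRep_single, mk_mul_out, mk_mul_out]
  have hval₁' : ρ₁ (hElt H₁ g (QuotientGroup.mk (c.out * x d)))
        (ρ₁ (gElt H₁ (c.out * x d)) v₁)
      = ρ₁ (gElt H₁ (g * (c.out * x d))) v₁ := by
    rw [show gElt H₁ (g * (Quotient.out c * x d))
        = hElt H₁ g (QuotientGroup.mk (Quotient.out c * x d)) * gElt H₁ (Quotient.out c * x d)
      from gElt_mul H₁ g _, map_mul]
    rfl
  have hval₂' : ρ₂ (hElt H₂ g (QuotientGroup.mk (c.out * y d)))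
        (ρ₂ (gElt H₂ (c.out * y d)) v₂)
      = ρ₂ (gElt H₂ (g * (c.out * y d))) v₂ := by
    rw [show gElt H₂ (g * (Quotient.out c * y d))
        = hElt H₂ g (QuotientGroup.mk (Quotient.out c * y d)) * gElt H₂ (Quotient.out c * y d)
      from gElt_mul H₂ g _, map_mul]
    rfl
  rw [hval₁', hval₂']
  simp only [mul_assoc]

lemma mackey_main
    (f₁ : ∀ d : D, ↥(K d) →* ↥H₁) (f₂ : ∀ d : D, ↥(K d) →* ↥H₂)
    (hf₁ : ∀ (d : D) (k : ↥(K d)), ((f₁ d k : ↥H₁) : G) = (x d)⁻¹ * (k : G) * x d)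
    (hf₂ : ∀ (d : D) (k : ↥(K d)), ((f₂ d k : ↥H₂) : G) = (y d)⁻¹ * (k : G) * y d)
    (hD : IsDCosetReps H₁ H₂ D)
    (hd : ∀ d : D, ∃ h₁ ∈ H₁, ∃ h₂ ∈ H₂, (x d)⁻¹ * y d = h₁ * (d : G) * h₂)
    (hK : ∀ d, K d = conjSubgroup (x d) H₁ ⊓ conjSubgroup (y d) H₂) :
    RepIso F ((IndRep F H₁ ρ₁).tprod (IndRep F H₂ ρ₂))
      (dsumRep F fun d : D =>
        IndRep F (K d) (Representation.tprod (ρ₁.comp (f₁ d)) (ρ₂.comp (f₂ d)))) :=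
  repIso_trans F
    (repIso_tprod F (repIso_ind_cRep F H₁ ρ₁) (repIso_ind_cRep F H₂ ρ₂))
    (repIso_trans F (mackey_concrete F ρ₁ ρ₂ f₁ f₂ hf₁ hf₂ hD hd hK)
      (repIso_dsum F fun d => repIso_symm F (repIso_ind_cRep F (K d) _)))

end Main
end MackeyAux
/-- **Mackey's tensor product theorem** (Theorem 2.1). For subgroups `H₁, H₂` of an arbitrary
group `G`, modules `V₁, V₂` over `FH₁, FH₂`, and a system `D` of representatives of the
`(H₁,H₂)`-double cosets of `G`, the `FG`-module `ind_{H₁}^G V₁ ⊗ ind_{H₂}^G V₂` decomposes as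
`⊕_{d ∈ D} V(d)` where, for any choice of `(x d, y d)` with `H₁ (x d)⁻¹ (y d) H₂ = H₁ d H₂`,
`V(d) ≅ ind_{H^{(x d, y d)}}^G (V₁^{x d} ⊗ V₂^{y d})`.  In particular (choosing `x = 1`,
`y = d`), it is isomorphic to `⊕_{d ∈ D} ind_{H₁ ∩ dH₂d⁻¹}^G (V₁ ⊗ V₂^d)`. -/
theorem mackey_tensor_product
    (F : Type*) [Field F] {G : Type*} [Group G] (H₁ H₂ : Subgroup G)
    (V₁ : Type*) [AddCommGroup V₁] [Module F V₁] (ρ₁ : Representation F ↥H₁ V₁)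
    (V₂ : Type*) [AddCommGroup V₂] [Module F V₂] (ρ₂ : Representation F ↥H₂ V₂)
    (D : Set G) (hD : IsDCosetReps H₁ H₂ D)
    (x y : D → G)
    (hxy : ∀ d : D, ∃ h₁ ∈ H₁, ∃ h₂ ∈ H₂, (x d)⁻¹ * y d = h₁ * (d : G) * h₂) :
    RepIso F ((IndRep F H₁ ρ₁).tprod (IndRep F H₂ ρ₂))
      (dsumRep F fun d : D =>
        IndRep F (conjSubgroup (x d) H₁ ⊓ conjSubgroup (y d) H₂)
          (Representation.tprod
            (ρ₁.comp (unconjHom (x d) H₁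
              (K := conjSubgroup (x d) H₁ ⊓ conjSubgroup (y d) H₂) inf_le_left))
            (ρ₂.comp (unconjHom (y d) H₂
              (K := conjSubgroup (x d) H₁ ⊓ conjSubgroup (y d) H₂) inf_le_right)))) ∧
    RepIso F ((IndRep F H₁ ρ₁).tprod (IndRep F H₂ ρ₂))
      (dsumRep F fun d : D =>
        IndRep F (H₁ ⊓ conjSubgroup (d : G) H₂)
          (Representation.tprod
            (ρ₁.comp (Subgroup.inclusion
              (inf_le_left : H₁ ⊓ conjSubgroup (d : G) H₂ ≤ H₁)))
            (ρ₂.comp (unconjHom (d : G) H₂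
              (K := H₁ ⊓ conjSubgroup (d : G) H₂) inf_le_right)))) := by
  constructor
  · exact MackeyAux.mackey_main F ρ₁ ρ₂
      (fun d => unconjHom (x d) H₁
        (K := conjSubgroup (x d) H₁ ⊓ conjSubgroup (y d) H₂) inf_le_left)
      (fun d => unconjHom (y d) H₂
        (K := conjSubgroup (x d) H₁ ⊓ conjSubgroup (y d) H₂) inf_le_right)
      (fun d k => rfl) (fun d k => rfl) hD hxy (fun d => rfl)
  · exact MackeyAux.mackey_main F ρ₁ ρ₂ (x := fun _ => (1 : G)) (y := fun d => (d : G))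
      (K := fun d : D => H₁ ⊓ conjSubgroup (d : G) H₂)
      (fun d => Subgroup.inclusion inf_le_left)
      (fun d => unconjHom (d : G) H₂ (K := H₁ ⊓ conjSubgroup (d : G) H₂) inf_le_right)
      (fun d k => by simp [Subgroup.coe_inclusion]) (fun d k => rfl) hD
      (fun d => ⟨1, H₁.one_mem, 1, H₂.one_mem, by simp⟩)
      (fun d => by rw [MackeyAux.conjSubgroup_one])
end

section
/- Let F be a field, let N ⊴ G be groups (possibly infinite), and let V be an irreducible FG-module that admits an irreducible FN-submodule W. Then: (a) V = Σ_{g∈G} gW and V is a completely reducible FN-module; (b) res_N^G V is the direct sum of its homogeneous components, and G acts transitively on the set of homogeneous components. -/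
open scoped TensorProduct DirectSum

section CliffordAux

variable {F : Type*} [Field F] {H : Type*} [Monoid H] {V : Type*} [AddCommGroup V] [Module F V]

/-- Invariance of a subspace under a representation. -/
def InvPred (θ : Representation F H V) (q : Submodule F V) : Prop :=
  ∀ g : H, ∀ v ∈ q, θ g v ∈ q

/-- Irreducible invariant subspace, phrased with ambient submodules. -/
def IrrSub (θ : Representation F H V) (q : Submodule F V) : Prop :=
  InvPred θ q ∧ q ≠ ⊥ ∧ ∀ r ≤ q, InvPred θ r → r = ⊥ ∨ r = q

lemma subRep_apply_coe (θ : Representation F H V) (q : Submodule F V) (hq : InvPred θ q)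
    (g : H) (x : ↥q) : ((subRep F θ q hq g x : V)) = θ g ↑x := rfl

lemma isIrreducibleRep_subRep_iff (θ : Representation F H V) (q : Submodule F V)
    (hq : InvPred θ q) :
    IsIrreducibleRep F (subRep F θ q hq) ↔ q ≠ ⊥ ∧ ∀ r ≤ q, InvPred θ r → r = ⊥ ∨ r = q := by
  constructor
  · rintro ⟨hnt, hmin⟩
    refine ⟨Submodule.nontrivial_iff_ne_bot.mp hnt, fun r hle hr => ?_⟩
    have hP : ∀ g : H, ∀ x ∈ r.comap q.subtype, subRep F θ q hq g x ∈ r.comap q.subtype := by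
      intro g x hx
      exact hr g _ hx
    have hmc : Submodule.map q.subtype (r.comap q.subtype) = r := by
      rw [Submodule.map_comap_subtype, inf_eq_right.mpr hle]
    rcases hmin _ hP with h | h
    · left; rw [← hmc, h, Submodule.map_bot]
    · right; rw [← hmc, h, Submodule.map_top, Submodule.range_subtype]
  · rintro ⟨hne, hmin⟩
    refine ⟨Submodule.nontrivial_iff_ne_bot.mpr hne, fun P hP => ?_⟩
    have hinj : Function.Injective q.subtype := Subtype.coe_injective
    have hle : P.map q.subtype ≤ q := Submodule.map_subtype_le q P
    have hinv : InvPred θ (P.map q.subtype) := by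
      rintro g v ⟨x, hx, rfl⟩
      exact ⟨subRep F θ q hq g x, hP g x hx, rfl⟩
    rcases hmin _ hle hinv with h | h
    · left
      apply Submodule.map_injective_of_injective hinj
      rw [h, Submodule.map_bot]
    · right
      apply Submodule.map_injective_of_injective hinj
      rw [h, Submodule.map_top, Submodule.range_subtype]

lemma irrSub_iff (θ : Representation F H V) (q : Submodule F V) :
    IrrSub θ q ↔ ∃ hq : InvPred θ q, IsIrreducibleRep F (subRep F θ q hq) := by
  constructor
  · rintro ⟨h1, h2⟩
    exact ⟨h1, (isIrreducibleRep_subRep_iff θ q h1).mpr h2⟩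
  · rintro ⟨h1, h2⟩
    exact ⟨h1, (isIrreducibleRep_subRep_iff θ q h1).mp h2⟩

lemma repIso_refl {W : Type*} [AddCommMonoid W] [Module F W] (σ : Representation F H W) :
    RepIso F σ σ :=
  ⟨LinearEquiv.refl F W, fun _ _ => rfl⟩

lemma repIso_symm {W W' : Type*} [AddCommMonoid W] [Module F W] [AddCommMonoid W']
    [Module F W'] {σ : Representation F H W} {σ' : Representation F H W'}
    (h : RepIso F σ σ') : RepIso F σ' σ := by
  obtain ⟨e, he⟩ := h
  refine ⟨e.symm, fun g v => e.injective ?_⟩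
  rw [e.apply_symm_apply, he, e.apply_symm_apply]

lemma repIso_trans {W W' W'' : Type*} [AddCommMonoid W] [Module F W] [AddCommMonoid W']
    [Module F W'] [AddCommMonoid W''] [Module F W''] {σ : Representation F H W}
    {σ' : Representation F H W'} {σ'' : Representation F H W''}
    (h : RepIso F σ σ') (h' : RepIso F σ' σ'') : RepIso F σ σ'' := by
  obtain ⟨e, he⟩ := h
  obtain ⟨e', he'⟩ := h'
  exact ⟨e.trans e', fun g v => by simp [he, he']⟩

lemma invPred_inf {θ : Representation F H V} {q r : Submodule F V} (hq : InvPred θ q)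
    (hr : InvPred θ r) : InvPred θ (q ⊓ r) :=
  fun g v hv => ⟨hq g v hv.1, hr g v hv.2⟩

lemma invPred_sup {θ : Representation F H V} {q r : Submodule F V} (hq : InvPred θ q)
    (hr : InvPred θ r) : InvPred θ (q ⊔ r) := by
  intro g v hv
  rcases Submodule.mem_sup.mp hv with ⟨a, ha, b, hb, rfl⟩
  rw [map_add]
  exact Submodule.add_mem_sup (hq g a ha) (hr g b hb)

lemma invPred_sSup {θ : Representation F H V} {S : Set (Submodule F V)}
    (hS : ∀ q ∈ S, InvPred θ q) : InvPred θ (sSup S) := by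
  intro g v hv
  rw [sSup_eq_iSup'] at hv ⊢
  refine Submodule.iSup_induction (motive := fun w => θ g w ∈ ⨆ q : S, (q : Submodule F V))
    (fun q : S => (q : Submodule F V)) hv ?_ ?_ ?_
  · intro q x hx
    exact le_iSup (fun q : S => (q : Submodule F V)) q (hS q q.2 g x hx)
  · simp
  · intro x y hx hy; rw [map_add]; exact add_mem hx hy


variable {θ : Representation F H V}

/-- In a representation generated by irreducibles, every invariant subspace has an
invariant complement. -/
lemma exists_invariant_compl (hsemi : sSup {q : Submodule F V | IrrSub θ q} = ⊤)
    {q : Submodule F V} (hq : InvPred θ q) :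
    ∃ c : Submodule F V, InvPred θ c ∧ IsCompl q c := by
  obtain ⟨m, -, hm⟩ := zorn_le_nonempty₀ {c : Submodule F V | InvPred θ c ∧ q ⊓ c = ⊥}
    (fun C hC hchain y hy => by
      refine ⟨sSup C, ⟨invPred_sSup (fun c hc => (hC hc).1), ?_⟩, fun z hz => le_sSup hz⟩
      rw [eq_bot_iff]
      rintro v ⟨hvq, hvs⟩
      obtain ⟨c, hc, hvc⟩ := (Submodule.mem_sSup_of_directed ⟨y, hy⟩ hchain.directedOn).mp hvs
      have := (hC hc).2
      rw [eq_bot_iff] at this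
      exact this ⟨hvq, hvc⟩)
    ⊥ ⟨fun g v hv => by simp only [Submodule.mem_bot] at hv ⊢; rw [hv, map_zero], by simp⟩
  obtain ⟨⟨hminv, hmq⟩, hmax⟩ := hm
  refine ⟨m, hminv, ⟨disjoint_iff.mpr hmq, ?_⟩⟩
  rw [codisjoint_iff, ← top_le_iff, ← hsemi]
  refine sSup_le fun s hs => ?_
  have hsub : s ⊓ (q ⊔ m) ≤ s := inf_le_left
  have hsinv : InvPred θ (s ⊓ (q ⊔ m)) := invPred_inf hs.1 (invPred_sup hq hminv)
  rcases hs.2.2 _ hsub hsinv with hbot | hfull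
  · exfalso
    have hqms : q ⊓ (m ⊔ s) = ⊥ := by
      rw [eq_bot_iff]
      rintro x ⟨hxq, hx⟩
      rcases Submodule.mem_sup.mp hx with ⟨m₀, hm₀, s₀, hs₀, rfl⟩
      have hs₀' : s₀ ∈ s ⊓ (q ⊔ m) := by
        refine ⟨hs₀, ?_⟩
        have : (m₀ + s₀) - m₀ ∈ q ⊔ m :=
          Submodule.sub_mem _ (Submodule.mem_sup_left hxq) (Submodule.mem_sup_right hm₀)
        simpa using this
      rw [hbot] at hs₀'
      simp only [Submodule.mem_bot] at hs₀'
      subst hs₀'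
      have : m₀ ∈ q ⊓ m := ⟨by simpa using hxq, hm₀⟩
      rw [hmq] at this
      simpa using this
    have hle : m ⊔ s ≤ m := hmax ⟨invPred_sup hminv hs.1, hqms⟩ le_sup_left
    have hsm : s ≤ m := le_trans le_sup_right hle
    have : s ≤ s ⊓ (q ⊔ m) := le_inf le_rfl (le_trans hsm le_sup_right)
    rw [hbot, le_bot_iff] at this
    exact hs.2.1 this
  · exact inf_eq_left.mp hfull

/-- The invariant subspace generated by one vector. -/
private def genSub (θ : Representation F H V) (x : V) : Submodule F V :=
  Submodule.span F (Set.range fun h : H => θ h x)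

private lemma genSub_invPred (x : V) : InvPred θ (genSub θ x) := by
  intro g v hv
  refine Submodule.span_induction (p := fun w _ => θ g w ∈ genSub θ x) ?_ ?_ ?_ ?_ hv
  · rintro w ⟨h, rfl⟩
    refine Submodule.subset_span ⟨g * h, ?_⟩
    show θ (g * h) x = θ g (θ h x)
    rw [map_mul]; rfl
  · simp
  · intro a b _ _ ha hb; rw [map_add]; exact add_mem ha hb
  · intro c a _ ha; rw [map_smul]; exact Submodule.smul_mem _ c ha

private lemma self_mem_genSub (x : V) : x ∈ genSub θ x :=
  Submodule.subset_span ⟨1, by show θ 1 x = x; rw [map_one]; rfl⟩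

private lemma genSub_le {x : V} {r : Submodule F V} (hr : InvPred θ r) (hx : x ∈ r) :
    genSub θ x ≤ r := by
  rw [genSub, Submodule.span_le]
  rintro v ⟨h, rfl⟩
  exact hr h x hx

/-- Every nonzero invariant subspace of a semisimple representation contains an
irreducible invariant subspace. -/
lemma exists_irrSub_le (hsemi : sSup {q : Submodule F V | IrrSub θ q} = ⊤)
    {X : Submodule F V} (hX : InvPred θ X) (hne : X ≠ ⊥) :
    ∃ s : Submodule F V, IrrSub θ s ∧ s ≤ X := by
  obtain ⟨x, hxX, hx0⟩ := (Submodule.ne_bot_iff X).mp hne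
  set Y := genSub θ x with hY
  have hYX : Y ≤ X := genSub_le hX hxX
  obtain ⟨m, -, hm⟩ := zorn_le_nonempty₀
    {m : Submodule F V | InvPred θ m ∧ m ≤ Y ∧ x ∉ m}
    (fun C hC hchain y hy => by
      refine ⟨sSup C, ⟨invPred_sSup (fun c hc => (hC hc).1),
        sSup_le (fun c hc => (hC hc).2.1), ?_⟩, fun z hz => le_sSup hz⟩
      intro hxs
      obtain ⟨c, hc, hvc⟩ := (Submodule.mem_sSup_of_directed ⟨y, hy⟩ hchain.directedOn).mp hxs
      exact (hC hc).2.2 hvc)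
    ⊥ ⟨fun g v hv => by simp only [Submodule.mem_bot] at hv ⊢; rw [hv, map_zero], bot_le,
      by simpa using hx0⟩
  obtain ⟨⟨hminv, hmY, hxm⟩, hmax⟩ := hm
  obtain ⟨c, hcinv, hcompl⟩ := exists_invariant_compl hsemi hminv
  refine ⟨Y ⊓ c, ⟨invPred_inf (genSub_invPred x) hcinv, ?_, ?_⟩, le_trans inf_le_left hYX⟩
  · -- Y ⊓ c ≠ ⊥
    intro hbot
    apply hxm
    have hYm : Y ≤ m := by
      intro y hyY
      have : y ∈ m ⊔ c := by rw [hcompl.sup_eq_top]; trivial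
      rcases Submodule.mem_sup.mp this with ⟨m₀, hm₀, c₀, hc₀, rfl⟩
      have hc₀' : c₀ ∈ Y ⊓ c := ⟨by
        have : (m₀ + c₀) - m₀ ∈ Y := Submodule.sub_mem _ hyY (hmY hm₀)
        simpa using this, hc₀⟩
      rw [hbot] at hc₀'
      simp only [Submodule.mem_bot] at hc₀'
      subst hc₀'
      simpa using hm₀
    exact hYm (self_mem_genSub x)
  · -- minimality
    intro r hrle hrinv
    by_cases hxmr : x ∈ m ⊔ r
    · right
      have hYmr : Y ≤ m ⊔ r := genSub_le (invPred_sup hminv hrinv) hxmr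
      refine le_antisymm hrle ?_
      intro s₀ hs₀
      rcases Submodule.mem_sup.mp (hYmr hs₀.1) with ⟨m₀, hm₀, r₀, hr₀, rfl⟩
      have hm₀c : m₀ ∈ m ⊓ c := by
        refine ⟨hm₀, ?_⟩
        have : (m₀ + r₀) - r₀ ∈ c := Submodule.sub_mem _ hs₀.2 (hrle hr₀).2
        simpa using this
      rw [hcompl.inf_eq_bot] at hm₀c
      simp only [Submodule.mem_bot] at hm₀c
      subst hm₀c
      simpa using hr₀
    · left
      have hle : m ⊔ r ≤ m := hmax
        ⟨invPred_sup hminv hrinv, sup_le hmY (le_trans hrle inf_le_left), hxmr⟩ le_sup_left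
      have hrm : r ≤ m ⊓ c := le_inf (le_trans le_sup_right hle) (le_trans hrle inf_le_right)
      rw [hcompl.inf_eq_bot, le_bot_iff] at hrm
      exact hrm

/-- Key lemma: an irreducible invariant subspace contained in a sup of irreducible
invariant subspaces is isomorphic (as a subrepresentation) to one of them. -/
lemma exists_iso_of_le_sSup (hsemi : sSup {q : Submodule F V | IrrSub θ q} = ⊤)
    {q : Submodule F V} (hq : IrrSub θ q) {S : Set (Submodule F V)}
    (hS : ∀ s ∈ S, IrrSub θ s) (hle : q ≤ sSup S) :
    ∃ s ∈ S, ∃ (hs : InvPred θ s), RepIso F (subRep F θ s hs) (subRep F θ q hq.1) := by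
  obtain ⟨c, hcinv, hcompl⟩ := exists_invariant_compl hsemi hq.1
  set f : V →ₗ[F] V := q.subtype ∘ₗ q.projectionOnto c hcompl with hf
  have hfq : ∀ v : V, f v ∈ q := fun v => (q.projectionOnto c hcompl v).2
  have hfid : ∀ v ∈ q, f v = v := fun v hv => by
    show ↑(q.projectionOnto c hcompl v) = v
    rw [show v = ↑(⟨v, hv⟩ : ↥q) from rfl, Submodule.projectionOnto_apply_left hcompl]
  have hfc : ∀ v ∈ c, f v = 0 := fun v hv => by
    show ↑(q.projectionOnto c hcompl v) = (0 : V)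
    rw [Submodule.projectionOnto_apply_of_mem_right hcompl hv]; rfl
  have hfe : ∀ (h : H) (v : V), f (θ h v) = θ h (f v) := by
    intro h v
    have hv : v ∈ q ⊔ c := by rw [hcompl.sup_eq_top]; trivial
    rcases Submodule.mem_sup.mp hv with ⟨a, ha, b, hb, rfl⟩
    have h1 : f (a + b) = a := by rw [map_add, hfid a ha, hfc b hb, add_zero]
    have h2 : f (θ h (a + b)) = θ h a := by
      rw [map_add (θ h), map_add, hfid _ (hq.1 h a ha), hfc _ (hcinv h b hb), add_zero]
    rw [h1, h2]
  have hex : ∃ s ∈ S, ¬ s ≤ LinearMap.ker f := by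
    by_contra hcon
    push_neg at hcon
    obtain ⟨x, hxq, hx0⟩ := (Submodule.ne_bot_iff q).mp hq.2.1
    have : q ≤ LinearMap.ker f := le_trans hle (sSup_le hcon)
    have := this hxq
    rw [LinearMap.mem_ker, hfid x hxq] at this
    exact hx0 this
  obtain ⟨s, hsS, hsker⟩ := hex
  obtain ⟨w, hws, hfw⟩ := SetLike.not_le_iff_exists.mp hsker
  rw [LinearMap.mem_ker] at hfw
  have hs := hS s hsS
  -- image of s is q
  have himg : s.map f = q := by
    refine (hq.2.2 _ ?_ ?_).resolve_left ?_
    · rintro v ⟨w', _, rfl⟩; exact hfq w'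
    · rintro h v ⟨w', hw', rfl⟩
      exact ⟨θ h w', hs.1 h w' hw', hfe h w'⟩
    · intro hbot
      have : f w ∈ s.map f := Submodule.mem_map_of_mem hws
      rw [hbot] at this
      exact hfw (by simpa using this)
  -- kernel meets s trivially
  have hker : LinearMap.ker f ⊓ s = ⊥ := by
    refine (hs.2.2 _ inf_le_right ?_).resolve_right ?_
    · intro h v hv
      refine ⟨?_, hs.1 h v hv.2⟩
      show f (θ h v) = 0
      have hv1 : f v = 0 := hv.1
      rw [hfe, hv1, map_zero]
    · intro hfull
      have : w ∈ LinearMap.ker f ⊓ s := by rw [hfull]; exact hws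
      exact hfw (LinearMap.mem_ker.mp this.1)
  set f' : ↥s →ₗ[F] ↥q := f.restrict (fun v _ => hfq v) with hf'
  have hbij : Function.Bijective f' := by
    constructor
    · intro a b hab
      have : ((a : V) - b) ∈ LinearMap.ker f ⊓ s := by
        refine ⟨?_, Submodule.sub_mem _ a.2 b.2⟩
        show f ((a : V) - b) = 0
        rw [map_sub]
        have h3 : (f' a : V) = f' b := by rw [hab]
        simp only [f', LinearMap.restrict_apply] at h3
        rw [h3, sub_self]
      rw [hker] at this
      exact Subtype.ext (by simpa [sub_eq_zero] using this)
    · intro y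
      have : (y : V) ∈ s.map f := by rw [himg]; exact y.2
      obtain ⟨w', hw', hww⟩ := this
      exact ⟨⟨w', hw'⟩, Subtype.ext (by simpa [f', LinearMap.restrict_apply] using hww)⟩
  refine ⟨s, hsS, hs.1, LinearEquiv.ofBijective f' hbij, fun h x => ?_⟩
  apply Subtype.ext
  show f (θ h ↑x) = θ h (f ↑x)
  exact hfe h ↑x

section HomComp

variable {W : Type*} [AddCommMonoid W] [Module F W]

/-- The defining set of a homogeneous component. -/
private def defSet (θ : Representation F H V) (σ : Representation F H W) :
    Set (Submodule F V) :=
  {q : Submodule F V |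
    ∃ hq : ∀ g : H, ∀ v ∈ q, θ g v ∈ q,
      IsIrreducibleRep F (subRep F θ q hq) ∧ RepIso F (subRep F θ q hq) σ}

lemma homComponent_eq_sSup (σ : Representation F H W) :
    homComponent F θ σ = sSup (defSet θ σ) := rfl

private lemma defSet_irrSub {σ : Representation F H W} {r : Submodule F V}
    (hr : r ∈ defSet θ σ) : IrrSub θ r := by
  obtain ⟨h1, h2, -⟩ := hr
  exact (irrSub_iff θ r).mpr ⟨h1, h2⟩

lemma invPred_homComponent (σ : Representation F H W) : InvPred θ (homComponent F θ σ) :=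
  invPred_sSup (fun q hq => (defSet_irrSub hq).1)

lemma le_homComponent {r : Submodule F V} (hr : InvPred θ r)
    (hirr : IsIrreducibleRep F (subRep F θ r hr)) :
    r ≤ homComponent F θ (subRep F θ r hr) :=
  le_sSup ⟨hr, hirr, repIso_refl _⟩

lemma homComponent_congr {W' : Type*} [AddCommMonoid W'] [Module F W']
    {σ : Representation F H W} {σ' : Representation F H W'} (h : RepIso F σ σ') :
    homComponent F θ σ = homComponent F θ σ' := by
  apply congrArg sSup
  ext r
  exact ⟨fun ⟨h1, h2, h3⟩ => ⟨h1, h2, repIso_trans h3 h⟩,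
    fun ⟨h1, h2, h3⟩ => ⟨h1, h2, repIso_trans h3 (repIso_symm h)⟩⟩

/-- Every irreducible invariant subspace of a homogeneous component has type `σ`. -/
lemma iso_of_le_homComponent (hsemi : sSup {q : Submodule F V | IrrSub θ q} = ⊤)
    {σ : Representation F H W} {r : Submodule F V} (hr : IrrSub θ r)
    (hle : r ≤ homComponent F θ σ) :
    RepIso F (subRep F θ r hr.1) σ := by
  obtain ⟨s, hsS, hs, hiso⟩ :=
    exists_iso_of_le_sSup hsemi hr (fun s hs => defSet_irrSub hs) hle
  obtain ⟨hs', -, hsiso⟩ := hsS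
  exact repIso_trans (repIso_symm hiso) hsiso

lemma invPred_of_mem_homComponents {S : Submodule F V} (hS : S ∈ homComponents F θ) :
    InvPred θ S := by
  obtain ⟨q, hq, -, rfl⟩ := hS
  exact invPred_homComponent _

lemma sSup_homComponents_eq_top (hsemi : sSup {q : Submodule F V | IrrSub θ q} = ⊤) :
    sSup (homComponents F θ) = ⊤ := by
  refine le_antisymm le_top ?_
  rw [← hsemi]
  refine sSup_le fun q hq => ?_
  obtain ⟨hqi, hqirr⟩ := (irrSub_iff θ q).mp hq
  exact le_trans (le_homComponent hqi hqirr)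
    (le_sSup ⟨q, hqi, hqirr, rfl⟩)

lemma sSupIndep_homComponents (hsemi : sSup {q : Submodule F V | IrrSub θ q} = ⊤) :
    sSupIndep (homComponents F θ) := by
  intro S hS
  rw [disjoint_iff]
  by_contra hne
  obtain ⟨q0, hq0, hirr0, hSeq⟩ := hS
  have hSinv : InvPred θ S := by rw [hSeq]; exact invPred_homComponent _
  have hXinv : InvPred θ (S ⊓ sSup (homComponents F θ \ {S})) :=
    invPred_inf hSinv (invPred_sSup fun T hT => invPred_of_mem_homComponents hT.1)
  obtain ⟨s, hs, hsle⟩ := exists_irrSub_le hsemi hXinv hne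
  have iso1 : RepIso F (subRep F θ s hs.1) (subRep F θ q0 hq0) :=
    iso_of_le_homComponent hsemi hs (hSeq ▸ le_trans hsle inf_le_left)
  set U : Set (Submodule F V) :=
    {r | ∃ hr : InvPred θ r, ∃ _ : IsIrreducibleRep F (subRep F θ r hr),
      homComponent F θ (subRep F θ r hr) ∈ homComponents F θ \ {S}} with hU
  have hUirr : ∀ r ∈ U, IrrSub θ r := by
    rintro r ⟨hr, hirr, -⟩
    exact (irrSub_iff θ r).mpr ⟨hr, hirr⟩
  have hrestU : sSup (homComponents F θ \ {S}) ≤ sSup U := by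
    refine sSup_le fun T hT => ?_
    obtain ⟨⟨qT, hqT, hirrT, hTeq⟩, hTne⟩ := hT
    rw [hTeq, homComponent_eq_sSup]
    refine sSup_le fun r hr => ?_
    obtain ⟨hr1, hr2, hr3⟩ := hr
    refine le_sSup ⟨hr1, hr2, ?_⟩
    rw [homComponent_congr hr3, ← hTeq]
    exact ⟨⟨qT, hqT, hirrT, hTeq⟩, hTne⟩
  obtain ⟨r, hrU, hr', iso2⟩ :=
    exists_iso_of_le_sSup hsemi hs hUirr (le_trans hsle (le_trans inf_le_right hrestU))
  obtain ⟨hrinv, hrirr, hrmem⟩ := hrU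
  have : homComponent F θ (subRep F θ r hrinv) = S := by
    rw [homComponent_congr iso2, homComponent_congr iso1, hSeq]
  rw [this] at hrmem
  exact hrmem.2 rfl

lemma repIso_subRep_congr {q q' : Submodule F V} (h : q = q') {hq : InvPred θ q}
    {hq' : InvPred θ q'} {W' : Type*} [AddCommMonoid W'] [Module F W']
    {σ : Representation F H W'} :
    RepIso F (subRep F θ q hq) σ → RepIso F (subRep F θ q' hq') σ := by subst h; exact id

end HomComp

end CliffordAux

section ConjAux

variable {F : Type*} [Field F] {G : Type*} [Group G] {N : Subgroup G}
  {V : Type*} [AddCommGroup V] [Module F V] (ρ : Representation F G V)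

lemma map_map_rho (q : Submodule F V) (g h : G) :
    (q.map (ρ g)).map (ρ h) = q.map (ρ (h * g)) := by
  rw [map_mul, Module.End.mul_eq_comp, Submodule.map_comp]

lemma map_rho_inv_map (q : Submodule F V) (g : G) : (q.map (ρ g)).map (ρ g⁻¹) = q := by
  rw [map_map_rho, inv_mul_cancel, map_one, Module.End.one_eq_id, Submodule.map_id]

lemma map_rho_map_inv (q : Submodule F V) (g : G) : (q.map (ρ g⁻¹)).map (ρ g) = q := by
  rw [map_map_rho, mul_inv_cancel, map_one, Module.End.one_eq_id, Submodule.map_id]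

lemma rho_inj (g : G) : Function.Injective (ρ g) := by
  intro a b hab
  have h := congrArg (ρ g⁻¹) hab
  rwa [← Module.End.mul_apply, ← Module.End.mul_apply, ← map_mul, inv_mul_cancel, map_one,
    Module.End.one_apply, Module.End.one_apply] at h

lemma invPred_map_conj (hN : N.Normal) {q : Submodule F V}
    (hq : InvPred (ρ.comp N.subtype) q) (g : G) :
    InvPred (ρ.comp N.subtype) (q.map (ρ g)) := by
  rintro n v ⟨w, hw, rfl⟩
  have hmem : (g⁻¹ * ↑n * g) ∈ N := by simpa using hN.conj_mem ↑n n.2 g⁻¹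
  refine ⟨ρ (g⁻¹ * ↑n * g) w, hq ⟨_, hmem⟩ w hw, ?_⟩
  show ρ g (ρ (g⁻¹ * ↑n * g) w) = ρ ↑n (ρ g w)
  rw [← Module.End.mul_apply, ← map_mul, show g * (g⁻¹ * ↑n * g) = ↑n * g by group,
    map_mul, Module.End.mul_apply]

lemma irrSub_map_conj (hN : N.Normal) {q : Submodule F V} (g : G)
    (hq : IrrSub (ρ.comp N.subtype) q) : IrrSub (ρ.comp N.subtype) (q.map (ρ g)) := by
  refine ⟨invPred_map_conj ρ hN hq.1 g, ?_, ?_⟩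
  · intro hbot
    apply hq.2.1
    have h := congrArg (Submodule.map (ρ g⁻¹)) hbot
    rwa [map_rho_inv_map, Submodule.map_bot] at h
  · intro r hrle hrinv
    have hr' : r.map (ρ g⁻¹) ≤ q := by
      have h := Submodule.map_mono (f := ρ g⁻¹) hrle
      rwa [map_rho_inv_map] at h
    have hrinv' : InvPred (ρ.comp N.subtype) (r.map (ρ g⁻¹)) := invPred_map_conj ρ hN hrinv g⁻¹
    rcases hq.2.2 _ hr' hrinv' with h | h
    · left
      have h2 := congrArg (Submodule.map (ρ g)) h
      rwa [map_rho_map_inv, Submodule.map_bot] at h2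
    · right
      have h2 := congrArg (Submodule.map (ρ g)) h
      rwa [map_rho_map_inv] at h2

lemma repIso_map_conj (hN : N.Normal) {q r : Submodule F V}
    (hq : InvPred (ρ.comp N.subtype) q) (hr : InvPred (ρ.comp N.subtype) r) (g : G)
    (h : RepIso F (subRep F (ρ.comp N.subtype) q hq) (subRep F (ρ.comp N.subtype) r hr)) :
    RepIso F (subRep F (ρ.comp N.subtype) (q.map (ρ g)) (invPred_map_conj ρ hN hq g))
      (subRep F (ρ.comp N.subtype) (r.map (ρ g)) (invPred_map_conj ρ hN hr g)) := by
  obtain ⟨e, he⟩ := h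
  set eQ := Submodule.equivMapOfInjective (ρ g) (rho_inj ρ g) q with heQ
  set eR := Submodule.equivMapOfInjective (ρ g) (rho_inj ρ g) r with heR
  refine ⟨(eQ.symm.trans e).trans eR, fun n x => ?_⟩
  apply Subtype.ext
  have hmem : (g⁻¹ * ↑n * g) ∈ N := by simpa using hN.conj_mem ↑n n.2 g⁻¹
  set m : ↥N := ⟨g⁻¹ * ↑n * g, hmem⟩ with hm
  set y : ↥q := eQ.symm x with hy
  have hxy : ρ g ↑y = ↑x := Submodule.map_equivMapOfInjective_symm_apply (ρ g) (rho_inj ρ g) q x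
  set x' := subRep F (ρ.comp N.subtype) (q.map (ρ g)) (invPred_map_conj ρ hN hq g) n x with hx'
  have hx'c : (x' : V) = ρ ↑n ↑x := rfl
  have key : eQ.symm x' = subRep F (ρ.comp N.subtype) q hq m y := by
    apply Subtype.ext
    apply rho_inj ρ g
    have h1 : ρ g ↑(eQ.symm x') = (x' : V) :=
      Submodule.map_equivMapOfInjective_symm_apply (ρ g) (rho_inj ρ g) q x'
    rw [h1, hx'c, ← hxy]
    show ρ ↑n (ρ g ↑y) = ρ g (ρ (g⁻¹ * ↑n * g) ↑y)
    rw [← Module.End.mul_apply, ← Module.End.mul_apply, ← map_mul, ← map_mul,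
      show g * (g⁻¹ * ↑n * g) = ↑n * g by group]
  show (eR ((eQ.symm.trans e) x') : V) = ρ ↑n ↑(eR ((eQ.symm.trans e) x))
  rw [LinearEquiv.trans_apply, LinearEquiv.trans_apply, key, he m y,
    Submodule.coe_equivMapOfInjective_apply, Submodule.coe_equivMapOfInjective_apply]
  show ρ g (ρ (g⁻¹ * ↑n * g) ↑(e y)) = ρ ↑n (ρ g ↑(e y))
  rw [← Module.End.mul_apply, ← Module.End.mul_apply, ← map_mul, ← map_mul,
    show g * (g⁻¹ * ↑n * g) = ↑n * g by group]

lemma map_homComponent (hN : N.Normal) {q : Submodule F V}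
    (hq : InvPred (ρ.comp N.subtype) q) (g : G) :
    (homComponent F (ρ.comp N.subtype) (subRep F (ρ.comp N.subtype) q hq)).map (ρ g)
      = homComponent F (ρ.comp N.subtype)
          (subRep F (ρ.comp N.subtype) (q.map (ρ g)) (invPred_map_conj ρ hN hq g)) := by
  refine le_antisymm ?_ ?_
  · rw [homComponent_eq_sSup (θ := ρ.comp N.subtype), Submodule.map_le_iff_le_comap]
    refine sSup_le fun d hd => ?_
    rw [← Submodule.map_le_iff_le_comap]
    obtain ⟨hd1, hd2, hd3⟩ := hd
    have hirr : IrrSub (ρ.comp N.subtype) (d.map (ρ g)) :=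
      irrSub_map_conj ρ hN g ((irrSub_iff _ d).mpr ⟨hd1, hd2⟩)
    refine le_sSup ⟨hirr.1, ?_, ?_⟩
    · exact (isIrreducibleRep_subRep_iff _ _ hirr.1).mpr hirr.2
    · exact repIso_subRep_congr rfl (repIso_map_conj ρ hN hd1 hq g hd3)
  · rw [homComponent_eq_sSup (θ := ρ.comp N.subtype)]
    refine sSup_le fun d hd => ?_
    obtain ⟨hd1, hd2, hd3⟩ := hd
    have hd1' : InvPred (ρ.comp N.subtype) (d.map (ρ g⁻¹)) := invPred_map_conj ρ hN hd1 g⁻¹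
    have hirr' : IrrSub (ρ.comp N.subtype) (d.map (ρ g⁻¹)) :=
      irrSub_map_conj ρ hN g⁻¹ ((irrSub_iff _ d).mpr ⟨hd1, hd2⟩)
    have hiso' : RepIso F
        (subRep F (ρ.comp N.subtype) (d.map (ρ g⁻¹)) hd1')
        (subRep F (ρ.comp N.subtype) q hq) := by
      have h1 := repIso_map_conj ρ hN hd1 (invPred_map_conj ρ hN hq g) g⁻¹ hd3
      obtain ⟨e1, he1⟩ := h1
      exact repIso_symm (repIso_subRep_congr (map_rho_inv_map ρ q g)
        (repIso_symm ⟨e1, he1⟩))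
    have hmemD : d.map (ρ g⁻¹) ∈
        {r : Submodule F V | ∃ hr : ∀ n : ↥N, ∀ v ∈ r, (ρ.comp N.subtype) n v ∈ r,
          IsIrreducibleRep F (subRep F (ρ.comp N.subtype) r hr) ∧
          RepIso F (subRep F (ρ.comp N.subtype) r hr) (subRep F (ρ.comp N.subtype) q hq)} :=
      ⟨hd1', (isIrreducibleRep_subRep_iff _ _ hd1').mpr hirr'.2, hiso'⟩
    have hle : d.map (ρ g⁻¹) ≤
        homComponent F (ρ.comp N.subtype) (subRep F (ρ.comp N.subtype) q hq) :=
      le_sSup hmemD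
    have h2 := Submodule.map_mono (f := ρ g) hle
    rwa [map_rho_map_inv] at h2

end ConjAux


/-- Theorem 3.2 (Clifford), parts (a) and (b): if `V` is an irreducible `FG`-module with an
irreducible `FN`-submodule `W` (`N ⊴ G`), then (a) `V = ∑_{g ∈ G} gW` and `V` is a
completely reducible `FN`-module, and (b) `res_N^G V` is the direct sum of its homogeneous
components, which are permuted transitively by `G`. -/
theorem clifford_sum_and_homogeneous_components
    (F : Type*) [Field F] {G : Type*} [Group G] (N : Subgroup G) (hN : N.Normal)
    (V : Type*) [AddCommGroup V] [Module F V] (ρ : Representation F G V)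
    (hρ : IsIrreducibleRep F ρ)
    (p : Submodule F V) (hp : ∀ n : ↥N, ∀ v ∈ p, (ρ.comp N.subtype) n v ∈ p)
    (hpirr : IsIrreducibleRep F (subRep F (ρ.comp N.subtype) p hp)) :
    -- (a)
    ((⨆ g : G, p.map (ρ g)) = ⊤ ∧ IsCompletelyReducibleRep F (ρ.comp N.subtype)) ∧
    -- (b): the homogeneous components are independent, sum to the whole space,
    -- are permuted by G, and transitively so
    (sSupIndep (homComponents F (ρ.comp N.subtype)) ∧
      sSup (homComponents F (ρ.comp N.subtype)) = ⊤ ∧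
      (∀ S ∈ homComponents F (ρ.comp N.subtype), ∀ g : G,
        S.map (ρ g) ∈ homComponents F (ρ.comp N.subtype)) ∧
      (∀ S₁ ∈ homComponents F (ρ.comp N.subtype), ∀ S₂ ∈ homComponents F (ρ.comp N.subtype),
        ∃ g : G, S₁.map (ρ g) = S₂)) := by
  have hpIrr : IrrSub (ρ.comp N.subtype) p := (irrSub_iff _ p).mpr ⟨hp, hpirr⟩
  have hU : (⨆ g : G, p.map (ρ g)) = ⊤ := by
    have hUinv : ∀ h : G, ∀ v ∈ (⨆ g : G, p.map (ρ g)), ρ h v ∈ (⨆ g : G, p.map (ρ g)) := by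
      intro h v hv
      refine Submodule.iSup_induction (motive := fun w => ρ h w ∈ ⨆ g : G, p.map (ρ g))
        (fun g => p.map (ρ g)) hv ?_ ?_ ?_
      · intro g x hx
        have h1 : ρ h x ∈ (p.map (ρ g)).map (ρ h) := Submodule.mem_map_of_mem hx
        rw [map_map_rho] at h1
        exact le_iSup (fun g => p.map (ρ g)) (h * g) h1
      · simp
      · intro x y hx hy; rw [map_add]; exact add_mem hx hy
    rcases hρ.2 _ hUinv with hbot | htop
    · exfalso
      have hpb : p ≤ ⨆ g : G, p.map (ρ g) := by
        have h1 : p.map (ρ 1) = p := by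
          rw [map_one, Module.End.one_eq_id, Submodule.map_id]
        exact le_trans (le_of_eq h1.symm) (le_iSup (fun g => p.map (ρ g)) 1)
      rw [hbot, le_bot_iff] at hpb
      exact hpIrr.2.1 hpb
    · exact htop
  have hsemi : sSup {q : Submodule F V | IrrSub (ρ.comp N.subtype) q} = ⊤ := by
    refine le_antisymm le_top ?_
    rw [← hU]
    exact iSup_le fun g => le_sSup (irrSub_map_conj ρ hN g hpIrr)
  have hCR : IsCompletelyReducibleRep F (ρ.comp N.subtype) := by
    unfold IsCompletelyReducibleRep
    have hset : {q : Submodule F V | ∃ hq : ∀ n : ↥N, ∀ v ∈ q, (ρ.comp N.subtype) n v ∈ q,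
          IsIrreducibleRep F (subRep F (ρ.comp N.subtype) q hq)}
        = {q : Submodule F V | IrrSub (ρ.comp N.subtype) q} := by
      ext q
      exact ⟨fun ⟨h1, h2⟩ => (irrSub_iff _ q).mpr ⟨h1, h2⟩, fun h => (irrSub_iff _ q).mp h⟩
    rw [hset, hsemi]
  have htype : ∀ q : Submodule F V, ∀ hq : IrrSub (ρ.comp N.subtype) q,
      ∃ g : G, RepIso F
        (subRep F (ρ.comp N.subtype) (p.map (ρ g)) (invPred_map_conj ρ hN hp g))
        (subRep F (ρ.comp N.subtype) q hq.1) := by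
    intro q hq
    have hle : q ≤ sSup (Set.range fun g : G => p.map (ρ g)) := by
      rw [sSup_range, hU]; exact le_top
    obtain ⟨s, hsrange, hs, hiso⟩ := exists_iso_of_le_sSup hsemi hq
      (fun s hsr => by obtain ⟨g, rfl⟩ := hsr; exact irrSub_map_conj ρ hN g hpIrr) hle
    obtain ⟨g, rfl⟩ := hsrange
    exact ⟨g, hiso⟩
  refine ⟨⟨hU, hCR⟩, sSupIndep_homComponents hsemi, sSup_homComponents_eq_top hsemi, ?_, ?_⟩
  · -- G permutes the homogeneous components
    intro S hS g
    obtain ⟨q, hq, hirr, rfl⟩ := hS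
    rw [map_homComponent ρ hN hq g]
    exact ⟨q.map (ρ g), invPred_map_conj ρ hN hq g,
      (isIrreducibleRep_subRep_iff _ _ _).mpr
        (irrSub_map_conj ρ hN g ((irrSub_iff _ q).mpr ⟨hq, hirr⟩)).2, rfl⟩
  · -- transitivity
    intro S₁ hS₁ S₂ hS₂
    obtain ⟨q₁, hq₁, hirr₁, rfl⟩ := hS₁
    obtain ⟨q₂, hq₂, hirr₂, rfl⟩ := hS₂
    obtain ⟨g₁, iso₁⟩ := htype q₁ ((irrSub_iff _ _).mpr ⟨hq₁, hirr₁⟩)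
    obtain ⟨g₂, iso₂⟩ := htype q₂ ((irrSub_iff _ _).mpr ⟨hq₂, hirr₂⟩)
    refine ⟨g₂ * g₁⁻¹, ?_⟩
    rw [map_homComponent ρ hN hq₁ (g₂ * g₁⁻¹)]
    refine homComponent_congr ?_
    have conj1 := repIso_map_conj ρ hN (invPred_map_conj ρ hN hp g₁) hq₁ (g₂ * g₁⁻¹) iso₁
    have heq : (p.map (ρ g₁)).map (ρ (g₂ * g₁⁻¹)) = p.map (ρ g₂) := by
      rw [map_map_rho, show g₂ * g₁⁻¹ * g₁ = g₂ by group]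
    have conj1' := repIso_subRep_congr heq (hq' := invPred_map_conj ρ hN hp g₂) conj1
    exact repIso_trans (repIso_symm conj1') iso₂
end

section
/- Let F be a field, let N ⊴ G be groups, and let W be an irreducible FN-module whose inertia group I_G(W) equals N. Then ind_N^G W is an irreducible FG-module. -/
open scoped TensorProduct DirectSum

section AuxInduced
variable (F : Type*) [Field F] {G : Type*} [Group G] (N : Subgroup G)
variable {W : Type*} [AddCommGroup W] [Module F W] (σ : Representation F ↥N W)

-- quotient basics
noncomputable def rp (Q : G ⧸ N) : G := Quotient.out Q
lemma mk_rp (Q : G ⧸ N) : (↑(rp N Q) : G ⧸ N) = Q := Quotient.out_eq Q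
lemma nmem (a : G) : (rp N ((a : G ⧸ N)))⁻¹ * a ∈ N := by
  rw [← QuotientGroup.eq, mk_rp]
noncomputable def nn (a : G) : ↥N := ⟨(rp N ((a : G ⧸ N)))⁻¹ * a, nmem N a⟩

open Classical in
noncomputable def LW (g : G) : W →ₗ[F] ⨁ _ : G ⧸ N, W :=
  (DirectSum.lof F (G ⧸ N) (fun _ => W) (↑g)) ∘ₗ (σ (nn N g))

noncomputable def Phi : MonoidAlgebra F G ⊗[F] W →ₗ[F] ⨁ _ : G ⧸ N, W :=
  TensorProduct.lift ((Finsupp.lsum F fun g => LinearMap.toSpanSingleton F _ (LW F N σ g)) ∘ₗ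
    (MonoidAlgebra.coeffLinearEquiv F : MonoidAlgebra F G ≃ₗ[F] G →₀ F).toLinearMap)

open Classical in
lemma Phi_tmul (g : G) (c : F) (w : W) :
    Phi F N σ (MonoidAlgebra.single g c ⊗ₜ[F] w) = c • LW F N σ g w := by
  simp only [Phi, TensorProduct.lift.tmul, LinearMap.comp_apply]
  erw [Finsupp.lsum_single]
  simp [LinearMap.toSpanSingleton]

open Classical in
lemma LW_mul_mem (g : G) (x : N) (w : W) :
    LW F N σ (g * x) w = LW F N σ g (σ x w) := by
  have hmk : ((g * (x:G) : G) : G ⧸ N) = (g : G ⧸ N) := by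
    rw [QuotientGroup.eq, mul_inv_rev]
    simpa [mul_assoc] using N.inv_mem x.2
  have hnn : nn N (g * (x:G)) = nn N g * x := by
    apply Subtype.ext
    show (rp N (((g*(x:G) : G)) : G ⧸ N))⁻¹ * (g * x) = ((rp N ((g : G ⧸ N)))⁻¹ * g) * x
    rw [hmk, mul_assoc]
  simp only [LW, LinearMap.comp_apply, hnn, map_mul, Module.End.mul_apply]
  rw [hmk]

open Classical in
lemma Phi_single_smul_rel (g : G) (x : N) (w : W) :
    Phi F N σ (MonoidAlgebra.single g (1:F) •
      ((MonoidAlgebra.single (x : G) (1 : F)) ⊗ₜ[F] w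
        - (1 : MonoidAlgebra F G) ⊗ₜ[F] (σ x w))) = 0 := by
  have h1 : MonoidAlgebra.single g (1:F) •
      ((MonoidAlgebra.single (x : G) (1 : F)) ⊗ₜ[F] w
        - (1 : MonoidAlgebra F G) ⊗ₜ[F] (σ x w))
      = MonoidAlgebra.single (g * (x:G)) (1:F) ⊗ₜ[F] w
        - MonoidAlgebra.single g (1:F) ⊗ₜ[F] (σ x w) := by
    rw [smul_sub, TensorProduct.smul_tmul', TensorProduct.smul_tmul', smul_eq_mul, smul_eq_mul,
      MonoidAlgebra.single_mul_single, one_mul, mul_one]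
  rw [h1, map_sub, Phi_tmul, Phi_tmul, one_smul, one_smul, LW_mul_mem, sub_self]

lemma Phi_rel : ∀ z ∈ indRel F N σ, Phi F N σ z = 0 := by
  have haux : ∀ (z : MonoidAlgebra F G ⊗[F] W),
      (∀ g : G, Phi F N σ (MonoidAlgebra.single g (1:F) • z) = 0) →
      ∀ b : MonoidAlgebra F G, Phi F N σ (b • z) = 0 := by
    intro z hz b
    induction b using MonoidAlgebra.induction with
    | zero => rw [zero_smul, map_zero]
    | single_add g c f hg hc ih =>
        rw [add_smul, map_add, ih]
        have h1 : (MonoidAlgebra.single g c : MonoidAlgebra F G)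
            = c • (MonoidAlgebra.single g (1:F)) := by
          rw [MonoidAlgebra.smul_single', mul_one]
        rw [h1, smul_assoc, map_smul, hz g, smul_zero]; exact zero_add 0
  have key : ∀ z ∈ indRel F N σ, ∀ g : G,
      Phi F N σ (MonoidAlgebra.single g (1:F) • z) = 0 := by
    intro z hz
    refine Submodule.span_induction ?_ ?_ ?_ ?_ hz
    · rintro z ⟨x, w, rfl⟩ g
      exact Phi_single_smul_rel F N σ g x w
    · intro g; rw [smul_zero, map_zero]
    · intro a b _ _ ha hb g; rw [smul_add, map_add, ha, hb, add_zero]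
    · intro a z _ ih g
      rw [smul_smul]
      exact haux z ih _
  intro z hz
  have := key z hz 1
  rwa [← MonoidAlgebra.one_def, one_smul] at this






open Classical in
noncomputable def Phibar : IndCar F N σ →ₗ[F] ⨁ _ : G ⧸ N, W :=
  (Submodule.liftQ ((indRel F N σ).restrictScalars F) (Phi F N σ)
    (fun z hz => LinearMap.mem_ker.2 (Phi_rel F N σ z hz))) ∘ₗ
    (Submodule.Quotient.restrictScalarsEquiv F (indRel F N σ)).symm.toLinearMap

open Classical in
lemma Phibar_mk (z : MonoidAlgebra F G ⊗[F] W) :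
    Phibar F N σ (Submodule.Quotient.mk z) = Phi F N σ z := by
  simp only [Phibar, LinearMap.comp_apply, LinearEquiv.coe_coe]
  rfl

open Classical in
noncomputable def Psi : (⨁ _ : G ⧸ N, W) →ₗ[F] IndCar F N σ :=
  DirectSum.toModule F (G ⧸ N) (IndCar F N σ) (fun Q =>
    (((indRel F N σ).mkQ).restrictScalars F) ∘ₗ
      ((TensorProduct.mk F (MonoidAlgebra F G) W) (MonoidAlgebra.single (rp N Q) (1:F))))

open Classical in
lemma Psi_lof (Q : G ⧸ N) (w : W) :
    Psi F N σ (DirectSum.lof F (G ⧸ N) (fun _ => W) Q w)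
      = Submodule.Quotient.mk (MonoidAlgebra.single (rp N Q) (1:F) ⊗ₜ[F] w) := by
  simp [Psi, DirectSum.toModule_lof]
  rfl

open Classical in
lemma mk_single_tmul (g : G) (c : F) (w : W) :
    (Submodule.Quotient.mk (MonoidAlgebra.single g c ⊗ₜ[F] w) : IndCar F N σ)
      = Submodule.Quotient.mk
          (c • (MonoidAlgebra.single (rp N ((g : G ⧸ N))) (1:F) ⊗ₜ[F] σ (nn N g) w)) := by
  rw [Submodule.Quotient.eq]
  have e1 : rp N ((g : G ⧸ N)) * ((nn N g : N) : G) = g := by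
    show rp N ((g : G ⧸ N)) * ((rp N ((g : G ⧸ N)))⁻¹ * g) = g
    group
  have h0 : MonoidAlgebra.single (rp N ((g : G ⧸ N))) c •
      ((MonoidAlgebra.single ((nn N g : G)) (1:F)) ⊗ₜ[F] w
        - (1 : MonoidAlgebra F G) ⊗ₜ[F] (σ (nn N g) w))
      = MonoidAlgebra.single g c ⊗ₜ[F] w
        - c • (MonoidAlgebra.single (rp N ((g : G ⧸ N))) (1:F) ⊗ₜ[F] σ (nn N g) w) := by
    rw [smul_sub, TensorProduct.smul_tmul', TensorProduct.smul_tmul', smul_eq_mul, smul_eq_mul,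
      MonoidAlgebra.single_mul_single, mul_one, mul_one, TensorProduct.smul_tmul',
      MonoidAlgebra.smul_single', mul_one, e1]
  rw [← h0]
  exact Submodule.smul_mem _ _ (Submodule.subset_span ⟨nn N g, w, rfl⟩)

open Classical in
lemma Psi_Phi (z : MonoidAlgebra F G ⊗[F] W) :
    Psi F N σ (Phi F N σ z) = Submodule.Quotient.mk z := by
  induction z using TensorProduct.induction_on with
  | zero => rw [map_zero, map_zero]; rfl
  | add a b ha hb => rw [map_add, map_add, ha, hb]; rfl
  | tmul a w =>
      induction a using MonoidAlgebra.induction with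
      | zero =>
          rw [TensorProduct.zero_tmul, map_zero, map_zero]; rfl
      | single_add g c f hg hc ih =>
          rw [TensorProduct.add_tmul, map_add, map_add, ih]
          have h2 : Psi F N σ (Phi F N σ ((MonoidAlgebra.single g c) ⊗ₜ[F] w))
              = Submodule.Quotient.mk ((MonoidAlgebra.single g c) ⊗ₜ[F] w) := by
            rw [Phi_tmul, map_smul, LW, LinearMap.comp_apply, Psi_lof,
              mk_single_tmul F N σ g c w]
            rfl
          rw [h2]
          rfl

open Classical in
lemma Phi_Psi_comp : (Phibar F N σ) ∘ₗ (Psi F N σ) = LinearMap.id := by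
  apply DirectSum.linearMap_ext
  intro Q
  ext w
  simp only [LinearMap.comp_apply, LinearMap.id_apply]
  rw [Psi_lof, Phibar_mk, Phi_tmul, one_smul, LW, LinearMap.comp_apply]
  have h1 : ((rp N Q : G) : G ⧸ N) = Q := mk_rp N Q
  have h2 : nn N (rp N Q) = 1 := by
    apply Subtype.ext
    show (rp N (((rp N Q : G)) : G ⧸ N))⁻¹ * rp N Q = 1
    have h3 := congrArg (rp N) h1
    rw [h3, inv_mul_cancel]
  rw [h2, map_one, Module.End.one_apply, h1]

open Classical in
noncomputable def EE : IndCar F N σ ≃ₗ[F] ⨁ _ : G ⧸ N, W :=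
  LinearEquiv.ofLinear (Phibar F N σ) (Psi F N σ)
    (Phi_Psi_comp F N σ)
    (LinearMap.ext fun z => by
      obtain ⟨y, rfl⟩ := Submodule.Quotient.mk_surjective _ z
      exact (congrArg (Psi F N σ) (Phibar_mk F N σ y)).trans (Psi_Phi F N σ y))

lemma IndRep_apply (g : G) (u : IndCar F N σ) :
    IndRep F N σ g u = MonoidAlgebra.single g (1:F) • u := rfl

open Classical in
lemma EE_action (g : G) (Q : G ⧸ N) (w : W) :
    (EE F N σ) (IndRep F N σ g ((EE F N σ).symm (DirectSum.lof F (G ⧸ N) (fun _ => W) Q w)))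
    = DirectSum.lof F (G ⧸ N) (fun _ => W) (((g * rp N Q : G) : G ⧸ N))
        (σ (nn N (g * rp N Q)) w) := by
  have h1 : (EE F N σ).symm (DirectSum.lof F (G ⧸ N) (fun _ => W) Q w)
      = Submodule.Quotient.mk (MonoidAlgebra.single (rp N Q) (1:F) ⊗ₜ[F] w) := by
    rw [EE, LinearEquiv.ofLinear_symm_apply, Psi_lof]
  rw [h1]
  show Phi F N σ (MonoidAlgebra.single g (1:F) • (MonoidAlgebra.single (rp N Q) (1:F) ⊗ₜ[F] w)) = _
  have h2 : MonoidAlgebra.single g (1:F) • (MonoidAlgebra.single (rp N Q) (1:F) ⊗ₜ[F] w)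
      = MonoidAlgebra.single (g * rp N Q) (1:F) ⊗ₜ[F] w := by
    rw [TensorProduct.smul_tmul', smul_eq_mul, MonoidAlgebra.single_mul_single, one_mul]
  rw [h2, Phi_tmul, one_smul, LW, LinearMap.comp_apply]






lemma irred_comp (hN : N.Normal) (hσ : IsIrreducibleRep F σ) (g : G) :
    IsIrreducibleRep F (σ.comp (conjHom hN g)) := by
  refine ⟨hσ.1, fun p hp => hσ.2 p ?_⟩
  intro x v hv
  have hx : conjHom hN g (conjHom hN g⁻¹ x) = x := by
    apply Subtype.ext
    show g * (g⁻¹ * (x:G) * g⁻¹⁻¹) * g⁻¹ = (x:G)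
    group
  have := hp (conjHom hN g⁻¹ x) v hv
  rwa [MonoidHom.comp_apply, hx] at this

lemma schur_bij {ρ τ : Representation F ↥N W} (hρ : IsIrreducibleRep F ρ)
    (hτ : IsIrreducibleRep F τ) (φ : W →ₗ[F] W)
    (hint : ∀ (x : N) (w : W), φ (ρ x w) = τ x (φ w)) (hφ : φ ≠ 0) :
    Function.Bijective φ := by
  constructor
  · rw [← LinearMap.ker_eq_bot]
    rcases hρ.2 (LinearMap.ker φ) (fun x w hw => by
      rw [LinearMap.mem_ker, hint, LinearMap.mem_ker.1 hw, map_zero]) with h | h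
    · exact h
    · exact absurd (LinearMap.ker_eq_top.1 h) hφ
  · rw [← LinearMap.range_eq_top]
    rcases hτ.2 (LinearMap.range φ) (fun x w hw => by
      obtain ⟨u, rfl⟩ := hw
      exact ⟨ρ x u, (hint x u)⟩) with h | h
    · exact absurd (LinearMap.range_eq_bot.1 h) hφ
    · exact h

open Classical in
noncomputable def Cmap (hN : N.Normal) (x : N) : (⨁ _ : G ⧸ N, W) →ₗ[F] ⨁ _ : G ⧸ N, W :=
  DFinsupp.mapRange.linearMap (fun Q => σ (conjHom hN (rp N Q)⁻¹ x))

open Classical in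
lemma Cmap_apply (hN : N.Normal) (x : N) (u : ⨁ _ : G ⧸ N, W) (Q : G ⧸ N) :
    Cmap F N σ hN x u Q = σ (conjHom hN (rp N Q)⁻¹ x) (u Q) := by
  rfl

open Classical in
lemma Cmap_lof (hN : N.Normal) (x : N) (Q : G ⧸ N) (w : W) :
    Cmap F N σ hN x (DirectSum.lof F (G ⧸ N) (fun _ => W) Q w)
      = DirectSum.lof F (G ⧸ N) (fun _ => W) Q (σ (conjHom hN (rp N Q)⁻¹ x) w) := by
  classical
  refine DFinsupp.ext fun Q' => ?_
  rw [Cmap_apply]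
  by_cases h : Q = Q'
  · subst h
    rw [DirectSum.lof_apply, DirectSum.lof_apply]
  · rw [DirectSum.lof_eq_of, DirectSum.lof_eq_of, DirectSum.of_eq_of_ne _ _ _ (Ne.symm h),
      DirectSum.of_eq_of_ne _ _ _ (Ne.symm h), map_zero]

open Classical in
lemma Cmap_Cmap (hN : N.Normal) (x y : N) (u : ⨁ _ : G ⧸ N, W) :
    Cmap F N σ hN x (Cmap F N σ hN y u) = Cmap F N σ hN (x * y) u := by
  classical
  refine DFinsupp.ext fun Q => ?_
  rw [Cmap_apply, Cmap_apply, Cmap_apply, map_mul, map_mul, Module.End.mul_apply]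

open Classical in
lemma Cmap_one (hN : N.Normal) (u : ⨁ _ : G ⧸ N, W) : Cmap F N σ hN 1 u = u := by
  classical
  refine DFinsupp.ext fun Q => ?_
  rw [Cmap_apply, map_one, map_one, Module.End.one_apply]

open Classical in
noncomputable def Tmap (g : G) : (⨁ _ : G ⧸ N, W) →ₗ[F] ⨁ _ : G ⧸ N, W :=
  (EE F N σ).toLinearMap ∘ₗ (IndRep F N σ g) ∘ₗ (EE F N σ).symm.toLinearMap

open Classical in
lemma Tmap_lof (g : G) (Q : G ⧸ N) (w : W) :
    Tmap F N σ g (DirectSum.lof F (G ⧸ N) (fun _ => W) Q w)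
      = DirectSum.lof F (G ⧸ N) (fun _ => W) (((g * rp N Q : G) : G ⧸ N))
          (σ (nn N (g * rp N Q)) w) :=
  EE_action F N σ g Q w

open Classical in
lemma Tmap_coe (hN : N.Normal) (x : N) :
    Tmap F N σ (x : G) = Cmap F N σ hN x := by
  classical
  apply DirectSum.linearMap_ext
  intro Q
  ext w
  simp only [LinearMap.comp_apply]
  rw [Tmap_lof, Cmap_lof]
  have hQ : (((x : G) * rp N Q : G) : G ⧸ N) = Q := by
    conv_rhs => rw [← mk_rp N Q]
    rw [QuotientGroup.eq, mul_inv_rev]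
    simpa [mul_assoc] using hN.conj_mem _ (N.inv_mem x.2) (rp N Q)⁻¹
  have hel : nn N ((x : G) * rp N Q) = conjHom hN (rp N Q)⁻¹ x := by
    apply Subtype.ext
    show (rp N ((((x:G) * rp N Q : G)) : G ⧸ N))⁻¹ * ((x:G) * rp N Q)
      = (rp N Q)⁻¹ * (x:G) * ((rp N Q)⁻¹)⁻¹
    rw [congrArg (rp N) hQ]
    group
  rw [hel, hQ]






open Classical in
lemma key_top (hN : N.Normal) (hσ : IsIrreducibleRep F σ)
    (hT : ∀ g : G, RepIso F (σ.comp (conjHom hN g)) σ ↔ g ∈ N)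
    (q : Submodule F (⨁ _ : G ⧸ N, W))
    (hq : ∀ g : G, ∀ v ∈ q, Tmap F N σ g v ∈ q) (hne : q ≠ ⊥) : q = ⊤ := by
  classical
  have hCq : ∀ (x : N), ∀ v ∈ q, Cmap F N σ hN x v ∈ q := by
    intro x v hv
    rw [← Tmap_coe F N σ hN x]
    exact hq _ v hv
  have hirr : ∀ Q : G ⧸ N, IsIrreducibleRep F (σ.comp (conjHom hN (rp N Q)⁻¹)) :=
    fun Q => irred_comp F N σ hN hσ _
  obtain ⟨v₀, hv₀q, hv₀⟩ := (Submodule.ne_bot_iff q).1 hne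
  have hex : ∃ n, ∃ v, v ∈ q ∧ v ≠ 0 ∧ (DFinsupp.support v).card = n :=
    ⟨_, v₀, hv₀q, hv₀, rfl⟩
  obtain ⟨v, hvq, hv0, hcard⟩ := Nat.find_spec hex
  have hmin : ∀ m, m ∈ q → m ≠ 0 → Nat.find hex ≤ (DFinsupp.support m).card :=
    fun m hm hm0 => Nat.find_min' hex ⟨m, hm, hm0, rfl⟩
  obtain ⟨i, hi⟩ : (DFinsupp.support v).Nonempty := by
    rw [Finset.nonempty_iff_ne_empty, Ne, DFinsupp.support_eq_empty]; exact hv0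
  have hvi : v i ≠ 0 := DFinsupp.mem_support_iff.1 hi
  set M : Submodule F (⨁ _ : G ⧸ N, W) :=
    Submodule.span F (Set.range fun x : N => Cmap F N σ hN x v) with hM
  have hvM : v ∈ M := Submodule.subset_span ⟨1, Cmap_one F N σ hN v⟩
  have hMq : M ≤ q := by
    rw [hM, Submodule.span_le]
    rintro _ ⟨x, rfl⟩
    exact hCq x v hvq
  have hMsupp : ∀ m ∈ M, ∀ Q, v Q = 0 → m Q = 0 := by
    intro m hm
    refine Submodule.span_induction ?_ ?_ ?_ ?_ hm
    · rintro _ ⟨x, rfl⟩ Q hQ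
      rw [Cmap_apply, hQ, map_zero]
    · intro Q _; rfl
    · intro a b _ _ ha hb Q hQ
      rw [DFinsupp.add_apply, ha Q hQ, hb Q hQ, add_zero]
    · intro c a _ ha Q hQ
      rw [DFinsupp.smul_apply, ha Q hQ, smul_zero]
  have hMC : ∀ (x : N), ∀ m ∈ M, Cmap F N σ hN x m ∈ M := by
    intro x m hm
    refine Submodule.span_induction ?_ ?_ ?_ ?_ hm
    · rintro _ ⟨y, rfl⟩
      rw [Cmap_Cmap]
      exact Submodule.subset_span ⟨x * y, rfl⟩
    · rw [map_zero]; exact M.zero_mem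
    · intro a b _ _ ha hb; rw [map_add]; exact M.add_mem ha hb
    · intro c a _ ha; rw [map_smul]; exact M.smul_mem c ha
  have hinj : ∀ m ∈ M, m i = 0 → m = 0 := by
    intro m hm h0
    by_contra hm0
    have h1 : DFinsupp.support m ⊆ (DFinsupp.support v).erase i := by
      intro Q hQ
      rw [Finset.mem_erase]
      constructor
      · rintro rfl; exact DFinsupp.mem_support_iff.1 hQ h0
      · by_contra hQv
        exact DFinsupp.mem_support_iff.1 hQ
          (hMsupp m hm Q (by rwa [← DFinsupp.notMem_support_iff]))
    have h2 := Finset.card_le_card h1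
    rw [Finset.card_erase_of_mem hi, hcard] at h2
    have h3 := hmin m (hMq hm) hm0
    have h4 : 0 < Nat.find hex := by
      rw [← hcard]
      exact Finset.card_pos.2 ⟨i, hi⟩
    omega
  have hsingle : ∀ Q, Q ≠ i → v Q = 0 := by
    intro j hji
    by_contra hvj
    set pi : ↥M →ₗ[F] W :=
      (DirectSum.component F (G ⧸ N) (fun _ => W) i) ∘ₗ M.subtype with hpi
    set pj : ↥M →ₗ[F] W :=
      (DirectSum.component F (G ⧸ N) (fun _ => W) j) ∘ₗ M.subtype with hpj
    have hpi_apply : ∀ m : ↥M, pi m = (m : ⨁ _ : G ⧸ N, W) i := fun m => rfl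
    have hpj_apply : ∀ m : ↥M, pj m = (m : ⨁ _ : G ⧸ N, W) j := fun m => rfl
    have hpi_inj : Function.Injective pi := by
      rw [← LinearMap.ker_eq_bot, Submodule.eq_bot_iff]
      rintro ⟨m, hm⟩ hker
      rw [LinearMap.mem_ker] at hker
      exact Subtype.ext (hinj m hm hker)
    have hrange_inv : ∀ (x : N), ∀ u ∈ LinearMap.range pi,
        (σ.comp (conjHom hN (rp N i)⁻¹)) x u ∈ LinearMap.range pi := by
      intro x u hu
      obtain ⟨m0, rfl⟩ := hu
      exact ⟨⟨Cmap F N σ hN x ↑m0, hMC x ↑m0 m0.2⟩, (Cmap_apply F N σ hN x ↑m0 i).symm ▸ rfl⟩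
    have hpi_surj : Function.Surjective pi := by
      rw [← LinearMap.range_eq_top]
      rcases (hirr i).2 (LinearMap.range pi) hrange_inv with h | h
      · exfalso
        have hmem : pi ⟨v, hvM⟩ ∈ LinearMap.range pi := ⟨_, rfl⟩
        rw [h, Submodule.mem_bot, hpi_apply] at hmem
        exact hvi hmem
      · exact h
    set eM := LinearEquiv.ofBijective pi ⟨hpi_inj, hpi_surj⟩ with heM
    set φ : W →ₗ[F] W := pj ∘ₗ (eM.symm : W →ₗ[F] ↥M) with hφ
    have hφ_apply : ∀ w : W, φ w = pj (eM.symm w) := fun w => rfl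
    have hsymm : ∀ (m : ↥M), eM.symm (pi m) = m := fun m => eM.symm_apply_apply m
    have hφint : ∀ (x : N) (w : W),
        φ (σ (conjHom hN (rp N i)⁻¹ x) w) = σ (conjHom hN (rp N j)⁻¹ x) (φ w) := by
      intro x w
      obtain ⟨m, rfl⟩ : ∃ m : ↥M, eM m = w := eM.surjective w
      have hm' : eM m = pi m := rfl
      have h1 : eM.symm (σ (conjHom hN (rp N i)⁻¹ x) (eM m)) =
          ⟨Cmap F N σ hN x ↑m, hMC x ↑m m.2⟩ := by
        rw [LinearEquiv.symm_apply_eq]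
        show σ (conjHom hN (rp N i)⁻¹ x) (eM m) = pi ⟨Cmap F N σ hN x ↑m, hMC x ↑m m.2⟩
        rw [hpi_apply, Cmap_apply, hm', hpi_apply]
      rw [hφ_apply, h1, hφ_apply, LinearEquiv.symm_apply_apply, hpj_apply, hpj_apply, Cmap_apply]
    have hφ0 : φ ≠ 0 := by
      intro h
      have h1 : eM.symm (v i) = ⟨v, hvM⟩ := by
        rw [LinearEquiv.symm_apply_eq]; rfl
      have h2 : φ (v i) = v j := by
        rw [hφ_apply, h1, hpj_apply]
      rw [h] at h2
      exact hvj (by simpa using h2.symm)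
    have hbij : Function.Bijective φ :=
      schur_bij F N (hirr i) (hirr j) φ hφint hφ0
    set eφ := LinearEquiv.ofBijective φ hbij with heφ
    set hel : G := (rp N j)⁻¹ * rp N i with hhel
    have hiso : RepIso F (σ.comp (conjHom hN hel)) σ := by
      refine ⟨eφ.symm, fun y u => ?_⟩
      have base : ∀ w, φ (σ y w) = σ (conjHom hN hel y) (φ w) := by
        intro w
        have hx := hφint (conjHom hN ((rp N i)⁻¹)⁻¹ y) w
        have e1 : conjHom hN (rp N i)⁻¹ (conjHom hN ((rp N i)⁻¹)⁻¹ y) = y := by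
          apply Subtype.ext
          show (rp N i)⁻¹ * ((rp N i)⁻¹⁻¹ * (y:G) * ((rp N i)⁻¹)⁻¹⁻¹) * (rp N i)⁻¹⁻¹ = (y:G)
          group
        have e2 : conjHom hN (rp N j)⁻¹ (conjHom hN ((rp N i)⁻¹)⁻¹ y)
            = conjHom hN hel y := by
          apply Subtype.ext
          show (rp N j)⁻¹ * ((rp N i)⁻¹⁻¹ * (y:G) * ((rp N i)⁻¹)⁻¹⁻¹) * ((rp N j)⁻¹)⁻¹
            = hel * (y:G) * hel⁻¹
          rw [hhel]; group
        rw [e1, e2] at hx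
        exact hx
      have h5 := base (eφ.symm u)
      have heq : φ (eφ.symm u) = u := eφ.apply_symm_apply u
      rw [heq] at h5
      show eφ.symm (σ (conjHom hN hel y) u) = σ y (eφ.symm u)
      rw [← h5]
      exact eφ.symm_apply_apply _
    have hmemN : hel ∈ N := (hT hel).1 hiso
    have hij : i = j := by
      have h1 : ((rp N j : G) : G ⧸ N) = ((rp N i : G) : G ⧸ N) := by
        rw [QuotientGroup.eq]; exact hmemN
      rw [mk_rp, mk_rp] at h1
      exact h1.symm
    exact hji hij.symm
  -- the whole component over i lies in q
  have hlofi : ∀ w : W, DirectSum.lof F (G ⧸ N) (fun _ => W) i w ∈ q := by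
    have hvlof : DirectSum.lof F (G ⧸ N) (fun _ => W) i (v i) = v := by
      refine DFinsupp.ext fun Q => ?_
      by_cases hQ : Q = i
      · subst hQ; rw [DirectSum.lof_apply]
      · rw [DirectSum.lof_eq_of, DirectSum.of_eq_of_ne _ _ _ hQ]
        exact (hsingle Q hQ).symm
    intro w
    have hZinv : ∀ (x : N), ∀ w' ∈ Submodule.comap
          (DirectSum.lof F (G ⧸ N) (fun _ => W) i) q,
        (σ.comp (conjHom hN (rp N i)⁻¹)) x w' ∈ Submodule.comap
          (DirectSum.lof F (G ⧸ N) (fun _ => W) i) q := by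
      intro x w' hw'
      rw [Submodule.mem_comap] at hw' ⊢
      have := hCq x _ hw'
      rwa [Cmap_lof] at this
    rcases (hirr i).2 _ hZinv with h | h
    · exfalso
      have : v i ∈ Submodule.comap (DirectSum.lof F (G ⧸ N) (fun _ => W) i) q := by
        rw [Submodule.mem_comap, hvlof]; exact hvq
      rw [h, Submodule.mem_bot] at this
      exact hvi this
    · have : w ∈ Submodule.comap (DirectSum.lof F (G ⧸ N) (fun _ => W) i) q := by
        rw [h]; trivial
      rwa [Submodule.mem_comap] at this
  -- all components lie in q
  have hlof : ∀ (Q : G ⧸ N) (w : W), DirectSum.lof F (G ⧸ N) (fun _ => W) Q w ∈ q := by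
    intro Q w
    have hgi : (rp N Q * (rp N i)⁻¹) * rp N i = rp N Q := by group
    have hsa : σ (nn N ((rp N Q * (rp N i)⁻¹) * rp N i))
        (σ (nn N ((rp N Q * (rp N i)⁻¹) * rp N i))⁻¹ w) = w := by
      rw [← Module.End.mul_apply, ← map_mul, mul_inv_cancel, map_one, Module.End.one_apply]
    have hmem := hq (rp N Q * (rp N i)⁻¹) _
      (hlofi (σ (nn N ((rp N Q * (rp N i)⁻¹) * rp N i))⁻¹ w))
    rw [Tmap_lof, hsa] at hmem
    have hmk2 : ((((rp N Q * (rp N i)⁻¹) * rp N i : G)) : G ⧸ N) = Q := by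
      rw [hgi, mk_rp]
    rwa [hmk2] at hmem
  rw [Submodule.eq_top_iff']
  intro u
  have hu := DirectSum.sum_support_of u
  rw [← hu]
  refine Submodule.sum_mem _ fun Q _ => ?_
  rw [← DirectSum.lof_eq_of F]
  exact hlof Q (u Q)


end AuxInduced

/-- Corollary 3.4: if `N ⊴ G` and `W` is an irreducible `FN`-module whose inertia group is
`N` itself, then `ind_N^G W` is an irreducible `FG`-module. -/
theorem induced_irreducible_of_inertia_eq
    (F : Type*) [Field F] {G : Type*} [Group G] (N : Subgroup G) (hN : N.Normal)
    (W : Type*) [AddCommGroup W] [Module F W] (σ : Representation F ↥N W)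
    (hσ : IsIrreducibleRep F σ)
    (hT : ∀ g : G, RepIso F (σ.comp (conjHom hN g)) σ ↔ g ∈ N) :
    IsIrreducibleRep F (IndRep F N σ) := by
  classical
  constructor
  · haveI : Nontrivial W := hσ.1
    obtain ⟨w, hw⟩ := exists_ne (0 : W)
    refine nontrivial_of_ne
      ((EE F N σ).symm (DirectSum.lof F (G ⧸ N) (fun _ => W) (((1:G) : G ⧸ N)) w)) 0 ?_
    intro h
    have h1 := congrArg (EE F N σ) h
    rw [LinearEquiv.apply_symm_apply, map_zero] at h1
    have h2 := DirectSum.lof_apply (M := fun _ : G ⧸ N => W) F (((1:G) : G ⧸ N)) w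
    rw [h1] at h2
    exact hw (by simpa using h2.symm)
  · intro p hp
    by_cases hb : p = ⊥
    · exact Or.inl hb
    right
    have hq : ∀ g : G, ∀ u ∈ p.map ((EE F N σ) : IndCar F N σ →ₗ[F] ⨁ _ : G ⧸ N, W),
        Tmap F N σ g u ∈ p.map ((EE F N σ) : IndCar F N σ →ₗ[F] ⨁ _ : G ⧸ N, W) := by
      intro g u hu
      obtain ⟨z, hz, rfl⟩ := hu
      refine ⟨IndRep F N σ g z, hp g z hz, ?_⟩
      simp only [LinearEquiv.coe_coe]
      have h5 : Tmap F N σ g ((EE F N σ) z)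
          = EE F N σ (IndRep F N σ g ((EE F N σ).symm ((EE F N σ) z))) := rfl
      rw [h5, LinearEquiv.symm_apply_apply]
    have hqb : p.map ((EE F N σ) : IndCar F N σ →ₗ[F] ⨁ _ : G ⧸ N, W) ≠ ⊥ := by
      intro h
      apply hb
      rw [Submodule.eq_bot_iff]
      intro z hz
      have h2 : EE F N σ z ∈ p.map ((EE F N σ) : IndCar F N σ →ₗ[F] ⨁ _ : G ⧸ N, W) :=
        ⟨z, hz, rfl⟩
      rw [h, Submodule.mem_bot] at h2
      exact (LinearEquiv.map_eq_zero_iff _).1 h2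
    have htop := key_top F N σ hN hσ hT _ hq hqb
    rw [Submodule.eq_top_iff']
    intro z
    have h3 : EE F N σ z ∈ p.map ((EE F N σ) : IndCar F N σ →ₗ[F] ⨁ _ : G ⧸ N, W) := by
      rw [htop]; trivial
    obtain ⟨z', hz', hzz⟩ := h3
    have h4 : z' = z := (EE F N σ).injective hzz
    exact h4 ▸ hz'
end
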